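/- arXiv:1707.05609 — 5 statements merged into one kernel-verified Lean document; each statement's English description precedes it below -/
import Mathlib

section
/- Let γ > 0, let X be a real n×d matrix and y ∈ ℝⁿ. If ᾱ ∈ ℝⁿ minimizes the dual ridge objective Λ(α) = (1/2)‖Xᵀα‖₂² + (1/(2γ))‖α‖₂² − ⟨y, α⟩, then w̄ = Xᵀᾱ is the unique minimizer of the primal ridge objective F(w) = (γ/2)‖Xw − y‖₂² + (1/2)‖w‖₂². -/
open scoped BigOperators

-- helper: expansion of sum of squares
lemma sum_sq_sub {m : ℕ} (a b : Fin m → ℝ) (t : ℝ) :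
    ∑ x, (a x - t * b x)^2
      = ∑ x, (a x)^2 - 2*t*(∑ x, a x * b x) + t^2 * ∑ x, (b x)^2 := by
  rw [Finset.mul_sum, Finset.mul_sum, ← Finset.sum_sub_distrib, ← Finset.sum_add_distrib]
  exact Finset.sum_congr rfl fun x _ => by ring

lemma sum_sq_add {m : ℕ} (a b : Fin m → ℝ) :
    ∑ x, (a x + b x)^2
      = ∑ x, (a x)^2 + 2*(∑ x, a x * b x) + ∑ x, (b x)^2 := by
  rw [Finset.mul_sum, ← Finset.sum_add_distrib, ← Finset.sum_add_distrib]
  exact Finset.sum_congr rfl fun x _ => by ring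

lemma adj_sum {n d : ℕ} (X : Matrix (Fin n) (Fin d) ℝ) (u : Fin n → ℝ) (h : Fin d → ℝ) :
    ∑ j, X.transpose.mulVec u j * h j = ∑ i, u i * X.mulVec h i := by
  simp only [Matrix.mulVec, dotProduct, Matrix.transpose_apply,
    Finset.sum_mul, Finset.mul_sum]
  rw [Finset.sum_comm]
  exact Finset.sum_congr rfl fun i _ => Finset.sum_congr rfl fun j _ => by ring

/-- If `ᾱ` minimizes the dual ridge objective
`Λ(α) = (1/2)‖Xᵀα‖₂² + (1/(2γ))‖α‖₂² − ⟨y, α⟩`, then `w̄ = Xᵀᾱ` is the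
unique minimizer of the primal ridge objective
`F(w) = (γ/2)‖Xw − y‖₂² + (1/2)‖w‖₂²`. -/
theorem ridge_dual_to_primal (n d : ℕ) (γ : ℝ) (hγ : 0 < γ)
    (X : Matrix (Fin n) (Fin d) ℝ) (y : Fin n → ℝ)
    (F : (Fin d → ℝ) → ℝ)
    (hF : ∀ w, F w = γ / 2 * ∑ i, (X.mulVec w i - y i) ^ 2 + 1 / 2 * ∑ j, w j ^ 2)
    (Λ : (Fin n → ℝ) → ℝ)
    (hΛ : ∀ α, Λ α = 1 / 2 * ∑ j, (X.transpose.mulVec α j) ^ 2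
        + 1 / (2 * γ) * ∑ i, α i ^ 2 - ∑ i, y i * α i)
    (ᾱ : Fin n → ℝ) (hᾱ : ∀ α, Λ ᾱ ≤ Λ α) :
    (∀ w, F (X.transpose.mulVec ᾱ) ≤ F w) ∧
      ∀ w, (∀ v, F w ≤ F v) → w = X.transpose.mulVec ᾱ := by
  set wb := X.transpose.mulVec ᾱ with hw
  set v : Fin n → ℝ := fun i => X.mulVec wb i + (1/γ) * ᾱ i - y i with hv
  set Q : ℝ := 1/2 * ∑ j, (X.transpose.mulVec v j)^2 + 1/(2*γ) * ∑ i, (v i)^2 with hQdef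
  set S : ℝ := ∑ i, (v i)^2 with hSdef
  have hQ0 : 0 ≤ Q := by positivity
  have hS0 : 0 ≤ S := by positivity
  -- cross-term identity from adjoint
  have cross : ∑ j, X.transpose.mulVec ᾱ j * X.transpose.mulVec v j
        + (1/γ) * ∑ i, ᾱ i * v i - ∑ i, y i * v i = ∑ i, (v i)^2 := by
    have h1 : ∑ j, X.transpose.mulVec v j * wb j = ∑ i, v i * X.mulVec wb i :=
      adj_sum X v wb
    have h2 : ∑ j, X.transpose.mulVec ᾱ j * X.transpose.mulVec v j
        = ∑ i, v i * X.mulVec wb i := by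
      rw [← h1]
      exact Finset.sum_congr rfl fun j _ => by rw [hw]; ring
    rw [h2, Finset.mul_sum, ← Finset.sum_add_distrib, ← Finset.sum_sub_distrib]
    refine Finset.sum_congr rfl fun i _ => ?_
    simp only [hv]
    field_simp
  -- key expansion
  have key : ∀ t : ℝ, Λ (fun i => ᾱ i - t * v i) - Λ ᾱ = t^2 * Q - t * S := by
    intro t
    have hmv : X.transpose.mulVec (fun i => ᾱ i - t * v i)
        = fun j => X.transpose.mulVec ᾱ j - t * X.transpose.mulVec v j := by
      funext j
      simp only [Matrix.mulVec, dotProduct, Matrix.transpose_apply,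
        Finset.mul_sum, ← Finset.sum_sub_distrib]
      exact Finset.sum_congr rfl fun i _ => by ring
    rw [hΛ, hΛ, hmv]
    rw [sum_sq_sub (fun j => X.transpose.mulVec ᾱ j) (fun j => X.transpose.mulVec v j) t,
        sum_sq_sub ᾱ v t]
    have hy : ∑ i, y i * (ᾱ i - t * v i) = ∑ i, y i * ᾱ i - t * ∑ i, y i * v i := by
      rw [Finset.mul_sum, ← Finset.sum_sub_distrib]
      exact Finset.sum_congr rfl fun i _ => by ring
    rw [hy, hQdef, hSdef]
    linear_combination (-t) * cross
  -- stationarity: S = 0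
  have hSzero : S = 0 := by
    have hQ1 : (0:ℝ) < 2*(Q+1) := by linarith
    set t : ℝ := S/(2*(Q+1)) with ht
    have ht2 : t * (2*(Q+1)) = S := by rw [ht]; field_simp
    have h1 := hᾱ (fun i => ᾱ i - t * v i)
    have h2 := key t
    have h3 : 0 ≤ t^2*Q - t*S := by linarith
    rw [← ht2] at h3
    have ht2' : t^2 = 0 := by nlinarith [sq_nonneg t]
    have ht0 : t = 0 := pow_eq_zero_iff (by norm_num : (2:ℕ) ≠ 0) |>.mp ht2'
    rw [← ht2, ht0, zero_mul]
  have hvzero : ∀ i, v i = 0 := by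
    intro i
    have h := (Finset.sum_eq_zero_iff_of_nonneg (fun i _ => sq_nonneg (v i))).mp hSzero i (Finset.mem_univ i)
    exact pow_eq_zero_iff (by norm_num : (2:ℕ) ≠ 0) |>.mp h
  -- main expansion for F
  have main : ∀ w, F w = F wb + γ/2 * ∑ i, (X.mulVec (fun j => w j - wb j) i)^2
      + 1/2 * ∑ j, (w j - wb j)^2 := by
    intro w
    set h : Fin d → ℝ := fun j => w j - wb j with hh
    have hmv : ∀ i, X.mulVec w i = X.mulVec wb i + X.mulVec h i := by
      intro i
      simp only [Matrix.mulVec, dotProduct, hh, ← Finset.sum_add_distrib]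
      exact Finset.sum_congr rfl fun j _ => by ring
    have crossF : γ * ∑ i, (X.mulVec wb i - y i) * X.mulVec h i + ∑ j, wb j * h j = 0 := by
      have hadj : ∑ j, wb j * h j = ∑ i, ᾱ i * X.mulVec h i := by
        rw [hw]; exact adj_sum X ᾱ h
      rw [hadj, Finset.mul_sum, ← Finset.sum_add_distrib]
      apply Finset.sum_eq_zero
      intro i _
      have h4 : γ * v i = γ * (X.mulVec wb i - y i) + ᾱ i := by
        simp only [hv]
        field_simp
        ring
      have h5 : γ * (X.mulVec wb i - y i) + ᾱ i = 0 := by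
        rw [← h4, hvzero i, mul_zero]
      calc γ * ((X.mulVec wb i - y i) * X.mulVec h i) + ᾱ i * X.mulVec h i
          = (γ * (X.mulVec wb i - y i) + ᾱ i) * X.mulVec h i := by ring
        _ = 0 := by rw [h5, zero_mul]
    rw [hF, hF]
    have e1 : ∑ i, (X.mulVec w i - y i)^2
        = ∑ i, (X.mulVec wb i - y i)^2 + 2 * ∑ i, (X.mulVec wb i - y i) * X.mulVec h i
          + ∑ i, (X.mulVec h i)^2 := by
      rw [← sum_sq_add (fun i => X.mulVec wb i - y i) (fun i => X.mulVec h i)]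
      exact Finset.sum_congr rfl fun i _ => by rw [hmv i]; ring
    have e2 : ∑ j, (w j)^2 = ∑ j, (wb j)^2 + 2 * ∑ j, wb j * h j + ∑ j, (h j)^2 := by
      rw [← sum_sq_add wb h]
      exact Finset.sum_congr rfl fun j _ => by rw [hh]; ring
    rw [e1, e2]
    linear_combination crossF
  constructor
  · intro w
    have := main w
    have h1 : 0 ≤ γ/2 * ∑ i, (X.mulVec (fun j => w j - wb j) i)^2 := by positivity
    have h2 : 0 ≤ 1/2 * ∑ j, (w j - wb j)^2 := by positivity
    linarith
  · intro w hmin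
    have hle := hmin wb
    have := main w
    have h1 : 0 ≤ γ/2 * ∑ i, (X.mulVec (fun j => w j - wb j) i)^2 := by positivity
    have hsum : ∑ j, (w j - wb j)^2 ≤ 0 := by linarith
    have hsum0 : ∑ j, (w j - wb j)^2 = 0 :=
      le_antisymm hsum (Finset.sum_nonneg fun j _ => sq_nonneg _)
    funext j
    have h := (Finset.sum_eq_zero_iff_of_nonneg (fun j _ => sq_nonneg (w j - wb j))).mp hsum0 j (Finset.mem_univ j)
    have := pow_eq_zero_iff (by norm_num : (2:ℕ) ≠ 0) |>.mp h
    linarith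
end

section
/- Let 1 < p < 2 with conjugate exponent q (1/p + 1/q = 1), γ > 0, let X be a real n×d matrix and y ∈ ℝⁿ. If ᾱ ∈ ℝⁿ minimizes the dual objective Λ(α) = (1/q)‖Xᵀα‖_q^q + (1/(2γ))‖α‖₂² − ⟨y, α⟩, then w̄ = J_q(Xᵀᾱ) is the unique minimizer of the primal objective F(w) = (γ/2)‖Xw − y‖₂² + (1/p)‖w‖_p^p. -/
-- sign form vs derivative form
lemma sign_abs_rpow_eq (r t : ℝ) : Real.sign t * |t| ^ (r - 1) = |t| ^ (r - 2) * t := by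
  rcases lt_trichotomy t 0 with h | h | h
  · rw [Real.sign_of_neg h, abs_of_neg h]
    rw [show r - 1 = (r - 2) + 1 by ring, Real.rpow_add_one (by linarith)]
    ring
  · simp [h]
  · rw [Real.sign_of_pos h, abs_of_pos h]
    rw [show r - 1 = (r - 2) + 1 by ring, Real.rpow_add_one (ne_of_gt h)]
    ring

-- strict monotonicity of t ↦ |t|^(e) * sign t for e > 0
lemma signpow_strictMono {e : ℝ} (he : 0 < e) :
    StrictMono (fun t : ℝ => Real.sign t * |t| ^ e) := by
  have key : ∀ t : ℝ, 0 < t → (0:ℝ) < Real.sign t * |t| ^ e := by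
    intro t ht
    rw [Real.sign_of_pos ht, abs_of_pos ht, one_mul]
    exact Real.rpow_pos_of_pos ht e
  have keymono : ∀ a b : ℝ, 0 < a → a < b →
      Real.sign a * |a| ^ e < Real.sign b * |b| ^ e := by
    intro a b ha hab
    rw [Real.sign_of_pos ha, Real.sign_of_pos (ha.trans hab), abs_of_pos ha,
      abs_of_pos (ha.trans hab), one_mul, one_mul]
    exact Real.rpow_lt_rpow ha.le hab he
  have hodd : ∀ t : ℝ, Real.sign (-t) * |(-t)| ^ e = -(Real.sign t * |t| ^ e) := by
    intro t; rw [Real.sign_neg, abs_neg]; ring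
  intro a b hab
  show Real.sign a * |a| ^ e < Real.sign b * |b| ^ e
  rcases lt_trichotomy a 0 with ha | ha | ha
  · rcases lt_trichotomy b 0 with hb | hb | hb
    · have := keymono (-b) (-a) (by linarith) (by linarith)
      rw [hodd, hodd] at this; linarith
    · subst hb; simp only [Real.sign_zero, zero_mul]
      have := key (-a) (by linarith)
      rw [hodd] at this; linarith
    · have h1 := key (-a) (by linarith)
      rw [hodd] at h1
      have h2 := key b hb
      linarith
  · subst ha; simp only [Real.sign_zero, zero_mul]
    exact key b hab
  · exact keymono a b ha hab

lemma abs_rpow_hasDerivAt {r : ℝ} (hr : 1 < r) (t : ℝ) :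
    HasDerivAt (fun s : ℝ => |s| ^ r) (r * (|t| ^ (r - 2) * t)) t := by
  have := hasDerivAt_abs_rpow t hr
  convert this using 1; ring

lemma tangent_lt {p : ℝ} (hp : 1 < p) {a b : ℝ} (hab : a ≠ b) :
    |b| ^ p + p * (|b| ^ (p - 2) * b) * (a - b) < |a| ^ p := by
  set c : ℝ := |b| ^ (p - 2) * b with hc
  set h : ℝ → ℝ := fun t => |t| ^ p - p * c * t with hh
  have hderiv : ∀ t : ℝ, HasDerivAt h (p * (|t| ^ (p - 2) * t) - p * c) t := by
    intro t
    have h1 : HasDerivAt (fun t : ℝ => p * c * t) (p * c * 1) t :=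
      (hasDerivAt_id t).const_mul (p * c)
    have := (abs_rpow_hasDerivAt hp t).sub h1
    exact this.congr_deriv (by ring)
  have hcont : Continuous h := by
    have : Differentiable ℝ h := fun t => (hderiv t).differentiableAt
    exact this.continuous
  have hmono : ∀ x z : ℝ, x < z →
      Real.sign x * |x| ^ (p - 1) < Real.sign z * |z| ^ (p - 1) :=
    fun x z hxz => signpow_strictMono (by linarith : (0:ℝ) < p - 1) hxz
  have hdsign : ∀ t : ℝ, b < t → 0 < deriv h t := by
    intro t ht
    rw [(hderiv t).deriv]
    have := hmono b t ht
    rw [sign_abs_rpow_eq p t, sign_abs_rpow_eq p b] at this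
    have hp0 : 0 < p := by linarith
    nlinarith
  have hdsign' : ∀ t : ℝ, t < b → deriv h t < 0 := by
    intro t ht
    rw [(hderiv t).deriv]
    have := hmono t b ht
    rw [sign_abs_rpow_eq p t, sign_abs_rpow_eq p b] at this
    have hp0 : 0 < p := by linarith
    nlinarith
  have key : h b < h a := by
    rcases lt_or_gt_of_ne hab with h1 | h1
    · have := strictAntiOn_of_deriv_neg (convex_Iic b) (hcont.continuousOn)
        (fun t ht => hdsign' t (by simpa using ht)) (Set.mem_Iic.2 h1.le)
        (Set.mem_Iic.2 le_rfl) h1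
      exact this
    · have := strictMonoOn_of_deriv_pos (convex_Ici b) (hcont.continuousOn)
        (fun t ht => hdsign t (by simpa using ht)) (Set.mem_Ici.2 le_rfl)
        (Set.mem_Ici.2 h1.le) h1
      exact this
  simp only [hh] at key
  nlinarith [key]

lemma JB_scalar {p q : ℝ} (hq : 1 < q) (h1 : (q - 1) * (p - 1) = 1) (t : ℝ) :
    Real.sign (Real.sign t * |t| ^ (q - 1)) * |Real.sign t * |t| ^ (q - 1)| ^ (p - 1) = t := by
  rcases lt_trichotomy t 0 with h | h | h
  · rw [Real.sign_of_neg h, abs_of_neg h, neg_one_mul]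
    have hpow : (0:ℝ) < (-t) ^ (q - 1) := Real.rpow_pos_of_pos (by linarith) _
    rw [Real.sign_of_neg (by linarith), abs_neg, abs_of_pos hpow, neg_one_mul,
      ← Real.rpow_mul (by linarith : (0:ℝ) ≤ -t), h1, Real.rpow_one]
    ring
  · simp [h]
  · rw [Real.sign_of_pos h, abs_of_pos h, one_mul]
    have hpow : (0:ℝ) < t ^ (q - 1) := Real.rpow_pos_of_pos h _
    rw [Real.sign_of_pos hpow, abs_of_pos hpow, one_mul,
      ← Real.rpow_mul h.le, h1, Real.rpow_one]

lemma tangent_div {p : ℝ} (hp : 1 < p) {a b : ℝ} (hab : a ≠ b) {c : ℝ}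
    (hc : c = |b| ^ (p - 2) * b) :
    1 / p * |b| ^ p + c * (a - b) < 1 / p * |a| ^ p := by
  have hp0 : (0:ℝ) < p := by linarith
  have h := tangent_lt hp hab (b := b)
  rw [← hc] at h
  have h2 : 1 / p * (|b| ^ p + p * c * (a - b)) < 1 / p * |a| ^ p :=
    mul_lt_mul_of_pos_left h (by positivity)
  have h3 : 1 / p * (|b| ^ p + p * c * (a - b)) = 1 / p * |b| ^ p + c * (a - b) := by
    field_simp
  linarith

open scoped BigOperators

/-- For `1 < p < 2` with conjugate exponent `q`, if `ᾱ` minimizes the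
dual objective `Λ(α) = (1/q)‖Xᵀα‖_q^q + (1/(2γ))‖α‖₂² − ⟨y, α⟩`, then
`w̄ = J_q(Xᵀᾱ)` is the unique minimizer of the primal objective
`F(w) = (γ/2)‖Xw − y‖₂² + (1/p)‖w‖_p^p`. -/
theorem ellp_dual_to_primal (n d : ℕ) (p q γ : ℝ) (hp1 : 1 < p) (hp2 : p < 2)
    (hpq : 1 / p + 1 / q = 1) (hγ : 0 < γ)
    (X : Matrix (Fin n) (Fin d) ℝ) (y : Fin n → ℝ)
    (F : (Fin d → ℝ) → ℝ)
    (hF : ∀ w, F w = γ / 2 * ∑ i, (X.mulVec w i - y i) ^ 2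
        + 1 / p * ∑ j, |w j| ^ p)
    (Λ : (Fin n → ℝ) → ℝ)
    (hΛ : ∀ α, Λ α = 1 / q * ∑ j, |X.transpose.mulVec α j| ^ q
        + 1 / (2 * γ) * ∑ i, α i ^ 2 - ∑ i, y i * α i)
    (J : (Fin d → ℝ) → Fin d → ℝ)
    (hJ : ∀ u j, J u j = Real.sign (u j) * |u j| ^ (q - 1))
    (ᾱ : Fin n → ℝ) (hᾱ : ∀ α, Λ ᾱ ≤ Λ α) :
    (∀ w, F (J (X.transpose.mulVec ᾱ)) ≤ F w) ∧
      ∀ w, (∀ v, F w ≤ F v) → w = J (X.transpose.mulVec ᾱ) := by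
  -- basic exponent facts
  have hp0 : (0:ℝ) < p := by linarith
  have h1p : 1 / p < 1 := by rw [div_lt_one hp0]; exact hp1
  have h1ppos : 0 < 1 / p := by positivity
  have hinvq : 0 < 1 / q := by linarith
  have hqne : q ≠ 0 := by
    intro h; rw [h] at hinvq; simp at hinvq
  have hqpos : 0 < q := one_div_pos.mp hinvq
  have hq1 : 1 < q := by
    have h2 : 1 / q < 1 := by linarith
    have h3 : q * (1 / q) = 1 := by field_simp
    nlinarith
  have hsum : q + p = p * q := by
    field_simp at hpq; linarith
  have hqp1 : (q - 1) * (p - 1) = 1 := by nlinarith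
  set u : Fin d → ℝ := X.transpose.mulVec ᾱ with hu
  set wb : Fin d → ℝ := J u with hw
  -- Step B : the duality maps invert each other
  have hwj : ∀ j, wb j = |u j| ^ (q - 2) * u j := by
    intro j; rw [hw, hJ, sign_abs_rpow_eq]
  have hB : ∀ j, |wb j| ^ (p - 2) * wb j = u j := by
    intro j
    rw [← sign_abs_rpow_eq p (wb j), hw, hJ]
    exact JB_scalar hq1 hqp1 (u j)
  -- Step A : stationarity of the dual objective
  have hstat : ∀ i, X.mulVec wb i - y i = -(ᾱ i) / γ := by
    intro i
    set e : Fin n → ℝ := Pi.single i (1:ℝ) with he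
    set c : Fin d → ℝ := fun j => X.transpose j i with hcdef
    set φ : ℝ → ℝ := fun t =>
      1 / q * ∑ j, |u j + t * c j| ^ q
        + 1 / (2 * γ) * ∑ i', (ᾱ i' + t * e i') ^ 2
        - ∑ i', y i' * (ᾱ i' + t * e i') with hφ
    have hmv : ∀ t : ℝ, X.transpose.mulVec (ᾱ + t • e) = fun j => u j + t * c j := by
      intro t
      rw [Matrix.mulVec_add, Matrix.mulVec_smul, he, Matrix.mulVec_single]
      funext j
      simp [hu, hcdef, mul_comm]
    have hφeq : ∀ t, φ t = Λ (ᾱ + t • e) := by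
      intro t
      rw [hΛ, hφ, hmv t]
      simp [Pi.add_apply, Pi.smul_apply, smul_eq_mul, mul_comm]
    have hmin : IsLocalMin φ 0 := by
      apply Filter.Eventually.of_forall
      intro t
      rw [hφeq, hφeq]
      have h0 : ᾱ + (0:ℝ) • e = ᾱ := by simp
      rw [h0]
      exact hᾱ _
    -- derivative of φ at 0
    have hlin : ∀ (a b : ℝ), HasDerivAt (fun t : ℝ => a + t * b) b 0 := by
      intro a b
      simpa using ((hasDerivAt_id (0:ℝ)).mul_const b).const_add a
    have t1 : ∀ j, HasDerivAt (fun t : ℝ => |u j + t * c j| ^ q)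
        (q * (|u j| ^ (q - 2) * u j) * c j) 0 := by
      intro j
      have h2 := (abs_rpow_hasDerivAt hq1 (u j + 0 * c j)).comp 0 (hlin (u j) (c j))
      simp only [zero_mul, add_zero] at h2
      exact h2
    have t2 : ∀ i', HasDerivAt (fun t : ℝ => (ᾱ i' + t * e i') ^ 2)
        (2 * ᾱ i' * e i') 0 := by
      intro i'
      have h2 := (hlin (ᾱ i') (e i')).pow 2
      norm_num at h2
      exact h2
    have hDφ : HasDerivAt φ
        (1 / q * ∑ j, q * (|u j| ^ (q - 2) * u j) * c j
          + 1 / (2 * γ) * ∑ i', 2 * ᾱ i' * e i'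
          - ∑ i', y i' * e i') 0 := by
      rw [hφ]
      exact (((HasDerivAt.fun_sum (fun j _ => t1 j)).const_mul (1/q)).add
        ((HasDerivAt.fun_sum (fun i' _ => t2 i')).const_mul (1/(2*γ)))).sub
        (HasDerivAt.fun_sum (fun i' _ => (hlin (ᾱ i') (e i')).const_mul (y i')))
    have hD0 := hmin.hasDerivAt_eq_zero hDφ
    -- simplify
    have hsum1 : ∑ i', 2 * ᾱ i' * e i' = 2 * ᾱ i := by
      rw [he]
      rw [Finset.sum_eq_single i]
      · simp
      · intro b _ hb; simp [Pi.single_apply, hb]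
      · simp
    have hsum2 : ∑ i', y i' * e i' = y i := by
      rw [he]
      rw [Finset.sum_eq_single i]
      · simp
      · intro b _ hb; simp [Pi.single_apply, hb]
      · simp
    have hsum3 : 1 / q * ∑ j, q * (|u j| ^ (q - 2) * u j) * c j
        = ∑ j, wb j * c j := by
      rw [Finset.mul_sum]
      apply Finset.sum_congr rfl
      intro j _
      rw [hwj j]
      field_simp
    rw [hsum1, hsum2, hsum3] at hD0
    have hmvw : X.mulVec wb i = ∑ j, wb j * c j := by
      simp [Matrix.mulVec, dotProduct, hcdef, mul_comm]
    rw [hmvw]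
    have hγne : γ ≠ 0 := ne_of_gt hγ
    field_simp
    field_simp at hD0
    linarith
  -- the master estimate
  have master : ∀ w, w ≠ wb → F wb < F w := by
    intro w hne
    set A : Fin n → ℝ := fun i => X.mulVec wb i - y i with hA
    set Dv : Fin n → ℝ := fun i => X.mulVec w i - X.mulVec wb i with hDv
    have hswap : ∑ i, ᾱ i * Dv i = ∑ j, u j * (w j - wb j) := by
      have : ∀ i, ᾱ i * Dv i = ∑ j, ᾱ i * (X i j * (w j - wb j)) := by
        intro i
        rw [hDv]
        simp only [Matrix.mulVec, dotProduct, ← Finset.sum_sub_distrib, ← Finset.mul_sum]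
        congr 1
        apply Finset.sum_congr rfl
        intro j _
        ring
      rw [Finset.sum_congr rfl (fun i _ => this i), Finset.sum_comm]
      apply Finset.sum_congr rfl
      intro j _
      rw [hu]
      simp only [Matrix.mulVec, dotProduct, Matrix.transpose_apply, Finset.sum_mul]
      apply Finset.sum_congr rfl
      intro i _
      ring
    have hgA : ∀ i, γ * A i = -(ᾱ i) := by
      intro i
      show γ * (X.mulVec wb i - y i) = -(ᾱ i)
      have h2 := hstat i
      field_simp at h2
      linarith
    have hFid : F w = F wb + ∑ i, γ / 2 * Dv i ^ 2
        + ∑ j, (1 / p * |w j| ^ p - 1 / p * |wb j| ^ p - u j * (w j - wb j)) := by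
      rw [hF w, hF wb]
      have hexp : ∀ i, (X.mulVec w i - y i) ^ 2 = A i ^ 2 + 2 * A i * Dv i + Dv i ^ 2 := by
        intro i; rw [hA, hDv]; ring
      rw [Finset.sum_congr rfl (fun i _ => hexp i)]
      have e1 : γ / 2 * ∑ i, (A i ^ 2 + 2 * A i * Dv i + Dv i ^ 2)
          = γ / 2 * ∑ i, A i ^ 2 + ∑ i, (γ * A i) * Dv i + ∑ i, γ / 2 * Dv i ^ 2 := by
        simp only [Finset.mul_sum, ← Finset.sum_add_distrib]
        apply Finset.sum_congr rfl
        intro i _; ring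
      rw [e1]
      have e2 : ∑ i, (γ * A i) * Dv i = -∑ j, u j * (w j - wb j) := by
        rw [← hswap, ← Finset.sum_neg_distrib]
        apply Finset.sum_congr rfl
        intro i _
        rw [hgA i]
        ring
      rw [e2]
      have e3 : ∑ j, (1 / p * |w j| ^ p - 1 / p * |wb j| ^ p - u j * (w j - wb j))
          = 1 / p * ∑ j, |w j| ^ p - 1 / p * ∑ j, |wb j| ^ p - ∑ j, u j * (w j - wb j) := by
        rw [Finset.sum_sub_distrib, Finset.sum_sub_distrib, Finset.mul_sum, Finset.mul_sum]
      rw [e3]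
      ring
    have hterm : ∀ j, 0 ≤ 1 / p * |w j| ^ p - 1 / p * |wb j| ^ p - u j * (w j - wb j) := by
      intro j
      rcases eq_or_ne (w j) (wb j) with h | h
      · rw [h]; ring_nf; exact le_refl 0
      · have := tangent_div hp1 h (hB j).symm
        linarith
    have htermj : ∃ j, j ∈ Finset.univ ∧
        0 < 1 / p * |w j| ^ p - 1 / p * |wb j| ^ p - u j * (w j - wb j) := by
      have : ∃ j, w j ≠ wb j := Function.ne_iff.mp hne
      obtain ⟨j, hj⟩ := this
      refine ⟨j, Finset.mem_univ j, ?_⟩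
      have := tangent_div hp1 hj (hB j).symm
      linarith
    have hq2 : 0 ≤ ∑ i, γ / 2 * Dv i ^ 2 :=
      Finset.sum_nonneg fun i _ => by positivity
    have hp2' : 0 < ∑ j, (1 / p * |w j| ^ p - 1 / p * |wb j| ^ p - u j * (w j - wb j)) := by
      obtain ⟨j, hjmem, hjpos⟩ := htermj
      exact Finset.sum_pos' (fun j _ => hterm j) ⟨j, hjmem, hjpos⟩
    rw [hFid]
    linarith
  constructor
  · intro w
    rcases eq_or_ne w wb with h | h
    · rw [h]
    · exact (master w h).le
  · intro w hwmin
    by_contra h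
    exact absurd (hwmin wb) (not_le.mpr (master w h))
end

section
/- Let 1 < p < 2 with conjugate exponent q (1/p + 1/q = 1), γ > 0, let X be a real n×d matrix and y ∈ ℝⁿ. Define F(w) = (γ/2)‖Xw − y‖₂² + (1/p)‖w‖_p^p for w ∈ ℝᵈ and Λ(α) = (1/q)‖Xᵀα‖_q^q + (1/(2γ))‖α‖₂² − ⟨y, α⟩ for α ∈ ℝⁿ. Then strong duality holds: the infimum of F over ℝᵈ equals minus the infimum of Λ over ℝⁿ, and both infima are attained. -/
open scoped BigOperators

lemma hasDerivAt_abs_rpow' {q : ℝ} (hq : 2 ≤ q) (x : ℝ) :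
    HasDerivAt (fun z : ℝ => |z| ^ q) (q * x * ((x ^ 2 : ℝ)) ^ ((q - 2) / 2)) x := by
  have hfun : (fun z : ℝ => |z| ^ q) = fun z : ℝ => ((z ^ 2 : ℝ)) ^ (q / 2) := by
    funext z
    rw [show q / 2 = (1 / 2) * q by ring, Real.rpow_mul (sq_nonneg z), ← Real.sqrt_eq_rpow,
      Real.sqrt_sq_eq_abs]
  rw [hfun]
  have hinner : HasDerivAt (fun z : ℝ => (z ^ 2 : ℝ)) (2 * x) x := by
    simpa using hasDerivAt_pow 2 x
  have h := hinner.rpow_const (p := q / 2) (Or.inr (by linarith))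
  convert h using 1
  rw [show q / 2 - 1 = (q - 2) / 2 by ring]
  ring

lemma quad_nonneg' {γ : ℝ} (hγ : 0 < γ) (r a : ℝ) :
    0 ≤ γ / 2 * r ^ 2 + 1 / (2 * γ) * a ^ 2 + r * a := by
  have key : γ / 2 * r ^ 2 + 1 / (2 * γ) * a ^ 2 + r * a = (γ * r + a) ^ 2 / (2 * γ) := by
    field_simp
    ring
  rw [key]
  positivity

lemma exponent_facts' (p q : ℝ) (hp1 : 1 < p) (hp2 : p < 2) (hpq : 1 / p + 1 / q = 1) :
    2 < q ∧ (q - 1) * p = q := by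
  have hp0 : 0 < p := by linarith
  have hq0 : q ≠ 0 := by
    intro h
    rw [h] at hpq
    norm_num at hpq
    linarith
  have hkey : q + p = p * q := by
    field_simp at hpq
    linarith
  have hq2 : 2 < q := by
    rw [show q = p / (p - 1) by rw [eq_div_iff (by linarith : p - 1 ≠ 0)]; nlinarith]
    rw [lt_div_iff₀ (by linarith)]
    linarith
  exact ⟨hq2, by nlinarith⟩

lemma pow_identities' (p q : ℝ) (hp0 : 0 < p) (hq2 : 2 < q) (hqp : (q - 1) * p = q) (u : ℝ) :
    (u * ((u ^ 2 : ℝ)) ^ ((q - 2) / 2)) * u = |u| ^ q ∧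
    |u * ((u ^ 2 : ℝ)) ^ ((q - 2) / 2)| ^ p = |u| ^ q := by
  rcases eq_or_ne u 0 with rfl | hu
  · norm_num
    constructor
    · rw [Real.zero_rpow (by linarith : q ≠ 0)]
    · rw [Real.zero_rpow (by linarith : p ≠ 0), Real.zero_rpow (by linarith : q ≠ 0)]
  have hau : 0 < |u| := abs_pos.mpr hu
  have hsq : (u ^ 2 : ℝ) = |u| ^ (2 : ℝ) := by
    rw [show (2:ℝ) = ((2:ℕ):ℝ) by norm_num, Real.rpow_natCast, sq_abs]
  have h1 : ((u ^ 2 : ℝ)) ^ ((q - 2) / 2) = |u| ^ (q - 2) := by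
    rw [hsq, ← Real.rpow_mul (abs_nonneg u), show (2:ℝ) * ((q - 2) / 2) = q - 2 by ring]
  constructor
  · have e : (u * ((u ^ 2 : ℝ)) ^ ((q - 2) / 2)) * u = u ^ 2 * ((u ^ 2 : ℝ)) ^ ((q - 2) / 2) := by
      ring
    rw [e, h1, hsq, ← Real.rpow_add hau, show (2:ℝ) + (q - 2) = q by ring]
  · have h2 : |u * ((u ^ 2 : ℝ)) ^ ((q - 2) / 2)| = |u| ^ (q - 1) := by
      rw [abs_mul, h1, abs_of_nonneg (Real.rpow_nonneg (abs_nonneg u) _),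
        show q - 1 = 1 + (q - 2) by ring, Real.rpow_add hau, Real.rpow_one]
    rw [h2, ← Real.rpow_mul (abs_nonneg u), hqp]

/-- Strong duality for ℓ^p-regularized least squares, `1 < p < 2`:
the infimum of the primal objective `F` equals minus the infimum of the dual
objective `Λ`, and both infima are attained. -/
theorem ellp_strong_duality (n d : ℕ) (p q γ : ℝ) (hp1 : 1 < p) (hp2 : p < 2)
    (hpq : 1 / p + 1 / q = 1) (hγ : 0 < γ)
    (X : Matrix (Fin n) (Fin d) ℝ) (y : Fin n → ℝ)
    (F : (Fin d → ℝ) → ℝ)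
    (hF : ∀ w, F w = γ / 2 * ∑ i, (X.mulVec w i - y i) ^ 2
        + 1 / p * ∑ j, |w j| ^ p)
    (Λ : (Fin n → ℝ) → ℝ)
    (hΛ : ∀ α, Λ α = 1 / q * ∑ j, |X.transpose.mulVec α j| ^ q
        + 1 / (2 * γ) * ∑ i, α i ^ 2 - ∑ i, y i * α i) :
    (∃ wbar, ∀ w, F wbar ≤ F w) ∧ (∃ ᾱ, ∀ α, Λ ᾱ ≤ Λ α) ∧
      (⨅ w, F w) = - ⨅ α, Λ α := by
  obtain ⟨hq2, hqp⟩ := exponent_facts' p q hp1 hp2 hpq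
  have hp0 : 0 < p := by linarith
  have hq0 : 0 < q := by linarith
  have hconj : Real.HolderConjugate p q := ⟨by rw [inv_one, ← one_div, ← one_div]; exact hpq, hp0, hq0⟩
  -- swapping double sums
  have hswap : ∀ (w : Fin d → ℝ) (α : Fin n → ℝ),
      ∑ i, X.mulVec w i * α i = ∑ j, w j * X.transpose.mulVec α j := by
    intro w α
    simp only [Matrix.mulVec, dotProduct, Matrix.transpose_apply, Finset.sum_mul,
      Finset.mul_sum]
    rw [Finset.sum_comm]
    exact Finset.sum_congr rfl fun j _ => Finset.sum_congr rfl fun i _ => by ring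
  -- weak duality
  have weak : ∀ w α, 0 ≤ F w + Λ α := by
    intro w α
    rw [hF w, hΛ α]
    have e1 : ∑ i, y i * α i =
        ∑ j, w j * X.transpose.mulVec α j - ∑ i, (X.mulVec w i - y i) * α i := by
      rw [← hswap w α, ← Finset.sum_sub_distrib]
      exact Finset.sum_congr rfl fun i _ => by ring
    have t1 : 0 ≤ ∑ i, (γ / 2 * (X.mulVec w i - y i) ^ 2 + 1 / (2 * γ) * α i ^ 2
        + (X.mulVec w i - y i) * α i) :=
      Finset.sum_nonneg fun i _ => quad_nonneg' hγ _ _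
    have t2 : 0 ≤ ∑ j, (1 / p * |w j| ^ p + 1 / q * |X.transpose.mulVec α j| ^ q
        - w j * X.transpose.mulVec α j) := by
      apply Finset.sum_nonneg
      intro j _
      have h := Real.young_inequality (w j) (X.transpose.mulVec α j) hconj
      have h1 : |w j| ^ p / p = 1 / p * |w j| ^ p := by ring
      have h2 : |X.transpose.mulVec α j| ^ q / q = 1 / q * |X.transpose.mulVec α j| ^ q := by ring
      linarith [h, h1.ge, h2.ge]
    rw [Finset.sum_add_distrib, Finset.sum_add_distrib, ← Finset.mul_sum, ← Finset.mul_sum] at t1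
    rw [Finset.sum_sub_distrib, Finset.sum_add_distrib, ← Finset.mul_sum, ← Finset.mul_sum] at t2
    rw [e1]
    linarith
  -- continuity of Λ
  have habs : Continuous fun x : ℝ => |x| ^ q := by
    have hdiff : Differentiable ℝ fun x : ℝ => |x| ^ q :=
      fun x => (hasDerivAt_abs_rpow' hq2.le x).differentiableAt
    exact hdiff.continuous
  have hlin : ∀ j, Continuous fun α : Fin n → ℝ => X.transpose.mulVec α j := by
    intro j
    simp only [Matrix.mulVec, dotProduct]
    exact continuous_finset_sum _ fun i _ => continuous_const.mul (continuous_apply i)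
  have hcontΛ : Continuous Λ := by
    rw [funext hΛ]
    refine Continuous.sub (Continuous.add ?_ ?_) ?_
    · exact continuous_const.mul (continuous_finset_sum _ fun j _ => habs.comp (hlin j))
    · exact continuous_const.mul (continuous_finset_sum _ fun i _ => (continuous_apply i).pow 2)
    · exact continuous_finset_sum _ fun i _ => continuous_const.mul (continuous_apply i)
  -- coercivity of Λ
  have hbound : ∀ α : Fin n → ℝ, 1 / (2 * γ) * ‖α‖ ^ 2 - (∑ i, |y i|) * ‖α‖ ≤ Λ α := by
    intro α
    rw [hΛ α]
    have h1 : (0:ℝ) ≤ 1 / q * ∑ j, |X.transpose.mulVec α j| ^ q := by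
      apply mul_nonneg (by positivity)
      exact Finset.sum_nonneg fun j _ => Real.rpow_nonneg (abs_nonneg _) _
    have h2 : ‖α‖ ^ 2 ≤ ∑ i, α i ^ 2 := by
      have hs : (0:ℝ) ≤ ∑ i, α i ^ 2 := Finset.sum_nonneg fun i _ => sq_nonneg _
      have hle : ‖α‖ ≤ Real.sqrt (∑ i, α i ^ 2) := by
        rw [pi_norm_le_iff_of_nonneg (Real.sqrt_nonneg _)]
        intro i
        rw [Real.norm_eq_abs, ← Real.sqrt_sq_eq_abs]
        exact Real.sqrt_le_sqrt
          (Finset.single_le_sum (fun k _ => sq_nonneg (α k)) (Finset.mem_univ i))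
      calc ‖α‖ ^ 2 ≤ Real.sqrt (∑ i, α i ^ 2) ^ 2 :=
            pow_le_pow_left₀ (norm_nonneg α) hle 2
        _ = ∑ i, α i ^ 2 := Real.sq_sqrt hs
    have h3 : ∑ i, y i * α i ≤ (∑ i, |y i|) * ‖α‖ := by
      rw [Finset.sum_mul]
      apply Finset.sum_le_sum
      intro i _
      calc y i * α i ≤ |y i * α i| := le_abs_self _
        _ = |y i| * |α i| := abs_mul _ _
        _ ≤ |y i| * ‖α‖ := by
            apply mul_le_mul_of_nonneg_left _ (abs_nonneg _)
            simpa [Real.norm_eq_abs] using norm_le_pi_norm α i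
    have h4 : 1 / (2 * γ) * ‖α‖ ^ 2 ≤ 1 / (2 * γ) * ∑ i, α i ^ 2 :=
      mul_le_mul_of_nonneg_left h2 (by positivity)
    linarith
  have hcoer : Filter.Tendsto Λ (Filter.cocompact _) Filter.atTop := by
    have hg : Filter.Tendsto (fun t : ℝ => 1 / (2 * γ) * t ^ 2 - (∑ i, |y i|) * t)
        Filter.atTop Filter.atTop := by
      have hrw : (fun t : ℝ => 1 / (2 * γ) * t ^ 2 - (∑ i, |y i|) * t)
          = fun t : ℝ => t * (1 / (2 * γ) * t + -(∑ i, |y i|)) := by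
        funext t; ring
      rw [hrw]
      apply Filter.tendsto_id.atTop_mul_atTop₀
      apply Filter.tendsto_atTop_add_const_right
      exact (Filter.tendsto_id.const_mul_atTop (by positivity))
    exact Filter.tendsto_atTop_mono hbound (hg.comp tendsto_norm_cocompact_atTop)
  obtain ⟨ᾱ, hᾱ⟩ := hcontΛ.exists_forall_le hcoer
  set u : Fin d → ℝ := X.transpose.mulVec ᾱ with hu
  set wbar : Fin d → ℝ := fun j => u j * ((u j ^ 2 : ℝ)) ^ ((q - 2) / 2) with hwbar
  -- stationarity of Λ at ᾱ
  have hstat : ∀ i, X.mulVec wbar i + ᾱ i / γ - y i = 0 := by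
    intro i
    set e : Fin n → ℝ := Pi.single i 1 with he
    set g : ℝ → ℝ := fun t => Λ (ᾱ + t • e) with hg
    have hming : IsLocalMin g 0 := by
      apply Filter.Eventually.of_forall
      intro t
      have h0 : g 0 = Λ ᾱ := by simp [hg]
      rw [h0]
      exact hᾱ _
    have hXt : ∀ t : ℝ, ∀ j, X.transpose.mulVec (ᾱ + t • e) j = u j + t * X i j := by
      intro t j
      rw [Matrix.mulVec_add, Matrix.mulVec_smul]
      simp [he, Matrix.mulVec_single_one, hu]
    have hgt : ∀ t : ℝ, g t =
        1 / q * ∑ j, |u j + t * X i j| ^ q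
        + 1 / (2 * γ) * ∑ k, (ᾱ k + t * e k) ^ 2
        - ∑ k, y k * (ᾱ k + t * e k) := by
      intro t
      show Λ (ᾱ + t • e) = _
      rw [hΛ]
      have r1 : ∑ j, |X.transpose.mulVec (ᾱ + t • e) j| ^ q = ∑ j, |u j + t * X i j| ^ q :=
        Finset.sum_congr rfl fun j _ => by rw [hXt t j]
      have r2 : ∑ k, ((ᾱ + t • e) k) ^ 2 = ∑ k, (ᾱ k + t * e k) ^ 2 :=
        Finset.sum_congr rfl fun k _ => by simp
      have r3 : ∑ k, y k * (ᾱ + t • e) k = ∑ k, y k * (ᾱ k + t * e k) :=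
        Finset.sum_congr rfl fun k _ => by simp
      rw [r1, r2, r3]
    have haff : ∀ (c b : ℝ), HasDerivAt (fun t : ℝ => c + t * b) b 0 := by
      intro c b
      simpa using ((hasDerivAt_id (0 : ℝ)).mul_const b).const_add c
    have hd1 : ∀ j : Fin d, HasDerivAt (fun t : ℝ => |u j + t * X i j| ^ q)
        (q * wbar j * X i j) 0 := by
      intro j
      have h2 : HasDerivAt (fun t : ℝ => |u j + t * X i j| ^ q)
          ((q * (u j + 0 * X i j) * (((u j + 0 * X i j) ^ 2 : ℝ)) ^ ((q - 2) / 2)) * X i j) 0 :=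
        by have := (hasDerivAt_abs_rpow' hq2.le (u j + 0 * X i j)).comp 0 (haff (u j) (X i j)); exact this
      have h3 : q * wbar j * X i j
          = (q * (u j + 0 * X i j) * (((u j + 0 * X i j) ^ 2 : ℝ)) ^ ((q - 2) / 2)) * X i j := by
        rw [hwbar]
        ring_nf
      rw [h3]
      exact h2
    have hd2 : ∀ k : Fin n, HasDerivAt (fun t : ℝ => (ᾱ k + t * e k) ^ 2)
        (2 * ᾱ k * e k) 0 := by
      intro k
      have h := (hasDerivAt_pow 2 (ᾱ k + 0 * e k)).comp 0 (haff (ᾱ k) (e k))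
      exact h.congr_deriv (by norm_num)
    have hd3 : ∀ k : Fin n, HasDerivAt (fun t : ℝ => y k * (ᾱ k + t * e k)) (y k * e k) 0 :=
      fun k => by simpa using (haff (ᾱ k) (e k)).const_mul (y k)
    have hsum1 : HasDerivAt (fun t : ℝ => ∑ j, |u j + t * X i j| ^ q)
        (∑ j, q * wbar j * X i j) 0 := HasDerivAt.fun_sum fun j _ => hd1 j
    have hsum2 : HasDerivAt (fun t : ℝ => ∑ k, (ᾱ k + t * e k) ^ 2)
        (∑ k, 2 * ᾱ k * e k) 0 := HasDerivAt.fun_sum fun k _ => hd2 k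
    have hsum3 : HasDerivAt (fun t : ℝ => ∑ k, y k * (ᾱ k + t * e k))
        (∑ k, y k * e k) 0 := HasDerivAt.fun_sum fun k _ => hd3 k
    have hgderiv : HasDerivAt g
        (1 / q * ∑ j, q * wbar j * X i j + 1 / (2 * γ) * ∑ k, 2 * ᾱ k * e k
          - ∑ k, y k * e k) 0 := by
      have hder := ((hsum1.const_mul (1 / q)).add (hsum2.const_mul (1 / (2 * γ)))).sub hsum3
      have hfun : g = fun t : ℝ => 1 / q * ∑ j, |u j + t * X i j| ^ q
          + 1 / (2 * γ) * ∑ k, (ᾱ k + t * e k) ^ 2 - ∑ k, y k * (ᾱ k + t * e k) := funext hgt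
      rw [hfun]
      exact hder
    have hzero := hming.hasDerivAt_eq_zero hgderiv
    have he1 : ∑ k, 2 * ᾱ k * e k = 2 * ᾱ i := by
      simp [he, Pi.single_apply]
    have he2 : ∑ k, y k * e k = y i := by
      simp [he, Pi.single_apply]
    have he3 : 1 / q * ∑ j, q * wbar j * X i j = X.mulVec wbar i := by
      have hs : ∑ j, q * wbar j * X i j = q * X.mulVec wbar i := by
        simp only [Matrix.mulVec, dotProduct, Finset.mul_sum]
        exact Finset.sum_congr rfl fun j _ => by ring
      rw [hs]
      field_simp
    rw [he1, he2, he3] at hzero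
    have hq' : 1 / (2 * γ) * (2 * ᾱ i) = ᾱ i / γ := by
      field_simp
    rw [hq'] at hzero
    exact hzero
  have hstat' : ∀ i, y i = X.mulVec wbar i + ᾱ i / γ := fun i => by
    have := hstat i; linarith
  -- zero duality gap at (wbar, ᾱ)
  have hFΛ : F wbar + Λ ᾱ = 0 := by
    rw [hF, hΛ]
    have e1 : ∑ i, (X.mulVec wbar i - y i) ^ 2 = (∑ i, ᾱ i ^ 2) * (1 / γ ^ 2) := by
      rw [Finset.sum_mul]
      apply Finset.sum_congr rfl
      intro i _
      rw [hstat' i]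
      field_simp
      ring
    have e2 : ∑ j, |wbar j| ^ p = ∑ j, |u j| ^ q :=
      Finset.sum_congr rfl fun j _ => by
        rw [hwbar]
        exact (pow_identities' p q hp0 hq2 hqp (u j)).2
    have e3 : ∑ i, y i * ᾱ i = ∑ j, |u j| ^ q + (∑ i, ᾱ i ^ 2) * (1 / γ) := by
      have hrw : ∑ i, y i * ᾱ i = ∑ i, (X.mulVec wbar i * ᾱ i + ᾱ i ^ 2 * (1 / γ)) := by
        apply Finset.sum_congr rfl
        intro i _
        rw [hstat' i]
        field_simp
      rw [hrw, Finset.sum_add_distrib, ← Finset.sum_mul, hswap wbar ᾱ]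
      congr 1
      refine Finset.sum_congr rfl fun j _ => ?_
      rw [hwbar]
      exact (pow_identities' p q hp0 hq2 hqp (u j)).1
    rw [e1, e2, e3]
    have hS : 1 / p * (∑ j, |u j| ^ q) + 1 / q * (∑ j, |u j| ^ q) = ∑ j, |u j| ^ q := by
      rw [← add_mul, hpq, one_mul]
    have hA : γ / 2 * ((∑ i, ᾱ i ^ 2) * (1 / γ ^ 2)) + 1 / (2 * γ) * (∑ i, ᾱ i ^ 2)
        - (∑ i, ᾱ i ^ 2) * (1 / γ) = 0 := by
      field_simp
      ring
    linarith [hS, hA]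
  have hFwbar : F wbar = -Λ ᾱ := by linarith
  have hFmin : ∀ w, F wbar ≤ F w := fun w => by
    have := weak w ᾱ; linarith
  refine ⟨⟨wbar, hFmin⟩, ⟨ᾱ, hᾱ⟩, ?_⟩
  have h1 : (⨅ w, F w) = F wbar :=
    le_antisymm (ciInf_le ⟨-Λ ᾱ, by rintro x ⟨w, rfl⟩; have := weak w ᾱ; linarith⟩ wbar)
      (le_ciInf hFmin)
  have h2 : (⨅ α, Λ α) = Λ ᾱ :=
    le_antisymm (ciInf_le ⟨Λ ᾱ, by rintro x ⟨α, rfl⟩; exact hᾱ α⟩ ᾱ) (le_ciInf hᾱ)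
  rw [h1, h2, hFwbar]
end

section
/- For every p with 1 < p < 2 there exists a constant C_p > 0, depending only on p, such that for all d and all w, w̄ ∈ ℝᵈ with (w, w̄) ≠ (0, 0), (1/p)‖w̄‖_p^p − (1/p)‖w‖_p^p − ⟨J_p(w), w̄ − w⟩ ≥ C_p (‖w̄‖_p + ‖w‖_p)^{−(2−p)} ‖w̄ − w‖_p². -/
open scoped BigOperators

open Set Filter

section
variable {p : ℝ}

lemma abs_rpow_mul_self_eq_sign (x : ℝ) :
    |x| ^ (p - 2) * x = Real.sign x * |x| ^ (p - 1) := by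
  rcases lt_trichotomy x 0 with hx | hx | hx
  · rw [Real.sign_of_neg hx]
    have : |x| ^ (p - 1) = |x| ^ (p - 2) * |x| := by
      rw [← Real.rpow_add_one (abs_ne_zero.mpr hx.ne)]; ring_nf
    rw [this, abs_of_neg hx]; ring
  · simp [hx]
  · rw [Real.sign_of_pos hx]
    have : |x| ^ (p - 1) = |x| ^ (p - 2) * |x| := by
      rw [← Real.rpow_add_one (abs_ne_zero.mpr hx.ne')]; ring_nf
    rw [this, abs_of_pos hx]; ring


lemma sign_mul_abs_rpow_of_nonneg {q t : ℝ} (hq : q ≠ 0) (ht : 0 ≤ t) :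
    Real.sign t * |t| ^ q = t ^ q := by
  rcases ht.eq_or_lt with h | h
  · simp [← h, Real.sign_zero, Real.zero_rpow hq]
  · rw [Real.sign_of_pos h, abs_of_pos h, one_mul]

lemma sign_mul_abs_rpow_of_nonpos {q t : ℝ} (hq : q ≠ 0) (ht : t ≤ 0) :
    Real.sign t * |t| ^ q = -((-t) ^ q) := by
  rcases ht.eq_or_lt with h | h
  · simp [h, Real.sign_zero, Real.zero_rpow hq]
  · rw [Real.sign_of_neg h, abs_of_neg h, neg_one_mul]

lemma key_pow {p : ℝ} (hp1 : 1 < p) (hp2 : p < 2) {x y R : ℝ} (hx : 0 ≤ x)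
    (hxy : x ≤ y) (hyR : y ≤ R) :
    (p - 1) * R ^ (p - 2) * (y - x) ≤ y ^ (p - 1) - x ^ (p - 1) := by
  rcases hxy.eq_or_lt with h | h
  · simp [h]
  · have hy : 0 < y := lt_of_le_of_lt hx h
    have hcont : ContinuousOn (fun t : ℝ => t ^ (p - 1)) (Icc x y) := fun t _ =>
      (Real.continuousAt_rpow_const t (p - 1) (Or.inr (by linarith))).continuousWithinAt
    have hderiv : ∀ t ∈ Ioo x y,
        HasDerivAt (fun t : ℝ => t ^ (p - 1)) ((p - 1) * t ^ (p - 1 - 1)) t := fun t ht =>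
      Real.hasDerivAt_rpow_const (Or.inl (lt_of_le_of_lt hx ht.1).ne')
    obtain ⟨c, hc, hceq⟩ := exists_hasDerivAt_eq_slope (fun t : ℝ => t ^ (p - 1))
      (fun t => (p - 1) * t ^ (p - 1 - 1)) h hcont hderiv
    have hcpos : 0 < c := lt_of_le_of_lt hx hc.1
    have hR : R ^ (p - 2) ≤ c ^ (p - 2) :=
      Real.rpow_le_rpow_of_nonpos hcpos (le_of_lt (lt_of_lt_of_le hc.2 hyR)) (by linarith)
    have h1 : (p - 1) * R ^ (p - 2) ≤ (p - 1) * c ^ (p - 1 - 1) := by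
      have : p - 1 - 1 = p - 2 := by ring
      rw [this]
      exact mul_le_mul_of_nonneg_left hR (by linarith)
    calc (p - 1) * R ^ (p - 2) * (y - x) ≤ (p - 1) * c ^ (p - 1 - 1) * (y - x) :=
          mul_le_mul_of_nonneg_right h1 (by linarith)
      _ = y ^ (p - 1) - x ^ (p - 1) := by
          rw [hceq, div_mul_cancel₀ _ (by linarith : y - x ≠ 0)]

lemma J_mono {p : ℝ} (hp1 : 1 < p) (hp2 : p < 2) {R x y : ℝ} (hxR : -R ≤ x)
    (hxy : x ≤ y) (hyR : y ≤ R) :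
    (p - 1) * R ^ (p - 2) * (y - x) ≤
      Real.sign y * |y| ^ (p - 1) - Real.sign x * |x| ^ (p - 1) := by
  have hq : p - 1 ≠ 0 := by linarith
  rcases le_total 0 x with hx | hx
  · rw [sign_mul_abs_rpow_of_nonneg hq hx, sign_mul_abs_rpow_of_nonneg hq (hx.trans hxy)]
    exact key_pow hp1 hp2 hx hxy hyR
  · rcases le_total y 0 with hy | hy
    · rw [sign_mul_abs_rpow_of_nonpos hq hx, sign_mul_abs_rpow_of_nonpos hq hy]
      have := key_pow hp1 hp2 (neg_nonneg.mpr hy) (neg_le_neg hxy) (neg_le.mpr hxR)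
      linarith
    · rw [sign_mul_abs_rpow_of_nonpos hq hx, sign_mul_abs_rpow_of_nonneg hq hy]
      have h1 := key_pow hp1 hp2 le_rfl hy hyR
      have h2 := key_pow hp1 hp2 le_rfl (neg_nonneg.mpr hx) (neg_le.mpr hxR)
      rw [Real.zero_rpow hq] at h1 h2
      linarith

lemma hasDerivAt_abs_rpow_sign (hp1 : 1 < p) (x : ℝ) :
    HasDerivAt (fun t : ℝ => |t| ^ p) (p * (Real.sign x * |x| ^ (p - 1))) x := by
  have := hasDerivAt_abs_rpow x hp1
  rwa [mul_assoc, abs_rpow_mul_self_eq_sign x] at this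

lemma psi_hasDerivAt (hp1 : 1 < p) (k : ℝ) (x : ℝ) :
    HasDerivAt (fun t : ℝ => |t| ^ p / p - k / 2 * t ^ 2)
      (Real.sign x * |x| ^ (p - 1) - k * x) x := by
  have h1 := (hasDerivAt_abs_rpow_sign hp1 x).div_const p
  have h2 := (hasDerivAt_pow 2 x).const_mul (k / 2)
  refine (h1.sub h2).congr_deriv ?_
  have hp0 : p ≠ 0 := by linarith
  rw [mul_div_cancel_left₀ _ hp0]
  norm_num
  ring
end

lemma scalar_ineq (hp1 : 1 < p) (hp2 : p < 2) (a b : ℝ) :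
    (p - 1) / 2 * (|a| + |b|) ^ (p - 2) * (b - a) ^ 2 ≤
      |b| ^ p / p - |a| ^ p / p - Real.sign a * |a| ^ (p - 1) * (b - a) := by
  set R := |a| + |b| with hRdef
  have hR0 : 0 ≤ R := by positivity
  rcases hR0.eq_or_lt with hR | hR
  · have ha : a = 0 := by
      have h1 := abs_nonneg a; have h2 := abs_nonneg b
      have : |a| = 0 := by simp only [hRdef] at hR; linarith
      exact abs_eq_zero.mp this
    have hb : b = 0 := by
      have h1 := abs_nonneg a; have h2 := abs_nonneg b
      have : |b| = 0 := by simp only [hRdef] at hR; linarith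
      exact abs_eq_zero.mp this
    subst ha; subst hb
    simp [Real.zero_rpow (show p ≠ 0 by linarith)]
  · set k := (p - 1) * R ^ (p - 2) with hkdef
    set ψ := fun t : ℝ => |t| ^ p / p - k / 2 * t ^ 2 with hψdef
    have hconv : ConvexOn ℝ (Icc (-R) R) ψ := by
      apply MonotoneOn.convexOn_of_deriv (convex_Icc _ _)
      · exact fun x _ =>
          ((psi_hasDerivAt hp1 k x).differentiableAt).continuousAt.continuousWithinAt
      · exact fun x _ => (psi_hasDerivAt hp1 k x).differentiableAt.differentiableWithinAt
      · rw [interior_Icc]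
        intro x hx y hy hxy
        rw [(psi_hasDerivAt hp1 k x).deriv, (psi_hasDerivAt hp1 k y).deriv]
        have hmono := J_mono hp1 hp2 (le_of_lt hx.1) hxy (le_of_lt hy.2)
        have hk : k * (y - x) ≤
            Real.sign y * |y| ^ (p - 1) - Real.sign x * |x| ^ (p - 1) := by
          rw [hkdef]; linarith
        linarith [hk]
    have haR : a ∈ Icc (-R) R := by
      constructor <;> [skip; skip] <;>
        cases abs_le.mp (show |a| ≤ R by rw [hRdef]; linarith [abs_nonneg b]) <;> linarith
    have hbR : b ∈ Icc (-R) R := by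
      constructor <;> [skip; skip] <;>
        cases abs_le.mp (show |b| ≤ R by rw [hRdef]; linarith [abs_nonneg a]) <;> linarith
    have hgrad : (Real.sign a * |a| ^ (p - 1) - k * a) * (b - a) ≤ ψ b - ψ a := by
      rcases lt_trichotomy a b with hab | hab | hab
      · have := hconv.le_slope_of_hasDerivAt haR hbR hab (psi_hasDerivAt hp1 k a)
        rw [slope_def_field] at this
        have h2 := mul_le_mul_of_nonneg_right this (le_of_lt (sub_pos.mpr hab))
        rwa [div_mul_cancel₀ _ (sub_ne_zero.mpr hab.ne')] at h2
      · subst hab; simp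
      · have := hconv.slope_le_of_hasDerivAt hbR haR hab (psi_hasDerivAt hp1 k a)
        rw [slope_def_field] at this
        have hpos : 0 < a - b := sub_pos.mpr hab
        have h2 := mul_le_mul_of_nonneg_right this (le_of_lt hpos)
        rw [div_mul_cancel₀ _ hpos.ne'] at h2
        nlinarith [h2]
    have hexp : k / 2 * (b - a) ^ 2 =
        k / 2 * b ^ 2 - k / 2 * a ^ 2 - k * a * (b - a) := by ring
    have hψa : ψ a = |a| ^ p / p - k / 2 * a ^ 2 := rfl
    have hψb : ψ b = |b| ^ p / p - k / 2 * b ^ 2 := rfl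
    have hgoal : (p - 1) / 2 * R ^ (p - 2) * (b - a) ^ 2 = k / 2 * (b - a) ^ 2 := by
      rw [hkdef]; ring
    rw [hgoal]
    rw [hψa, hψb] at hgrad
    linarith [hgrad, hexp]


/-- uniform convexity inequality for `(1/p)‖·‖_p^p`, `1 < p < 2`:
there is a constant `C_p > 0` depending only on `p` such that for all `d` and
all `w, w̄ ∈ ℝᵈ` with `(w, w̄) ≠ (0, 0)`,
`(1/p)‖w̄‖_p^p − (1/p)‖w‖_p^p − ⟨J_p(w), w̄ − w⟩
   ≥ C_p (‖w̄‖_p + ‖w‖_p)^{−(2−p)} ‖w̄ − w‖_p²`. -/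
theorem uniform_convexity_lp (p : ℝ) (hp1 : 1 < p) (hp2 : p < 2) :
    ∃ C > 0, ∀ (d : ℕ) (w wbar : Fin d → ℝ), ¬(w = 0 ∧ wbar = 0) →
      C * ((∑ j, |wbar j| ^ p) ^ (1 / p) + (∑ j, |w j| ^ p) ^ (1 / p)) ^ (-(2 - p))
          * ((∑ j, |wbar j - w j| ^ p) ^ (1 / p)) ^ (2 : ℕ)
        ≤ 1 / p * ∑ j, |wbar j| ^ p - 1 / p * ∑ j, |w j| ^ p
            - ∑ j, (Real.sign (w j) * |w j| ^ (p - 1)) * (wbar j - w j) := by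
  have hp0 : (0:ℝ) < p := by linarith
  refine ⟨(p - 1) / 2, by linarith, ?_⟩
  intro d w wbar hne
  set A : ℝ := (∑ j, |w j| ^ p) ^ (1 / p) with hAdef
  set B : ℝ := (∑ j, |wbar j| ^ p) ^ (1 / p) with hBdef
  set K : ℝ := B + A with hKdef
  -- positivity of K
  have hsumw_nonneg : (0:ℝ) ≤ ∑ j, |w j| ^ p :=
    Finset.sum_nonneg fun j _ => Real.rpow_nonneg (abs_nonneg _) _
  have hsumb_nonneg : (0:ℝ) ≤ ∑ j, |wbar j| ^ p :=
    Finset.sum_nonneg fun j _ => Real.rpow_nonneg (abs_nonneg _) _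
  have hA0 : 0 ≤ A := Real.rpow_nonneg hsumw_nonneg _
  have hB0 : 0 ≤ B := Real.rpow_nonneg hsumb_nonneg _
  have hK : 0 < K := by
    rcases not_and_or.mp hne with hw | hw
    · have ⟨j, hj⟩ := Function.ne_iff.mp hw
      have hpos : 0 < ∑ j, |w j| ^ p :=
        Finset.sum_pos' (fun j _ => Real.rpow_nonneg (abs_nonneg _) _)
          ⟨j, Finset.mem_univ j, Real.rpow_pos_of_pos (abs_pos.mpr hj) p⟩
      have : 0 < A := Real.rpow_pos_of_pos hpos _
      rw [hKdef]; linarith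
    · have ⟨j, hj⟩ := Function.ne_iff.mp hw
      have hpos : 0 < ∑ j, |wbar j| ^ p :=
        Finset.sum_pos' (fun j _ => Real.rpow_nonneg (abs_nonneg _) _)
          ⟨j, Finset.mem_univ j, Real.rpow_pos_of_pos (abs_pos.mpr hj) p⟩
      have : 0 < B := Real.rpow_pos_of_pos hpos _
      rw [hKdef]; linarith
  -- notation
  set t : Fin d → ℝ := fun j => |w j| + |wbar j| with htdef
  have ht0 : ∀ j, 0 ≤ t j := fun j => by positivity
  set W : ℝ := ∑ j, t j ^ (p - 2) * (wbar j - w j) ^ 2 with hWdef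
  have hW0 : 0 ≤ W :=
    Finset.sum_nonneg fun j _ =>
      mul_nonneg (Real.rpow_nonneg (ht0 j) _) (sq_nonneg _)
  set S : ℝ := ∑ j, t j ^ p with hSdef
  have hS0 : 0 ≤ S := Finset.sum_nonneg fun j _ => Real.rpow_nonneg (ht0 j) _
  -- Step 1: sum of scalar inequalities
  have hstep1 : (p - 1) / 2 * W ≤
      1 / p * ∑ j, |wbar j| ^ p - 1 / p * ∑ j, |w j| ^ p
        - ∑ j, (Real.sign (w j) * |w j| ^ (p - 1)) * (wbar j - w j) := by
    have h1 : ∀ j ∈ Finset.univ,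
        (p - 1) / 2 * (t j ^ (p - 2) * (wbar j - w j) ^ 2) ≤
          |wbar j| ^ p / p - |w j| ^ p / p
            - Real.sign (w j) * |w j| ^ (p - 1) * (wbar j - w j) := by
      intro j _
      have := scalar_ineq hp1 hp2 (w j) (wbar j)
      rw [htdef]
      linarith [this]
    have h2 := Finset.sum_le_sum h1
    rw [← Finset.mul_sum] at h2
    refine le_trans h2 (le_of_eq ?_)
    rw [Finset.sum_sub_distrib, Finset.sum_sub_distrib, ← Finset.sum_div, ← Finset.sum_div]
    ring
  -- Step 2: Hölder
  have hconj : Real.HolderConjugate (2 / p) (2 / (2 - p)) := by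
    constructor
    · rw [inv_div, inv_div, inv_one]; ring
    · positivity
    · exact div_pos two_pos (by linarith)
  set u : Fin d → ℝ := fun j => (t j ^ (p - 2) * (wbar j - w j) ^ 2) ^ (p / 2) with hudef
  set v : Fin d → ℝ := fun j => (t j ^ p) ^ ((2 - p) / 2) with hvdef
  have hu0 : ∀ j, 0 ≤ u j := fun j =>
    Real.rpow_nonneg (mul_nonneg (Real.rpow_nonneg (ht0 j) _) (sq_nonneg _)) _
  have hv0 : ∀ j, 0 ≤ v j := fun j => Real.rpow_nonneg (Real.rpow_nonneg (ht0 j) _) _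
  have hholder := Real.inner_le_Lp_mul_Lq_of_nonneg (s := Finset.univ) hconj
    (f := u) (g := v) (fun j _ => hu0 j) (fun j _ => hv0 j)
  have huv : ∀ j, u j * v j = |wbar j - w j| ^ p := by
    intro j
    rcases (ht0 j).eq_or_lt with ht | ht
    · have h1 : |w j| = 0 ∧ |wbar j| = 0 := by
        constructor <;> [skip; skip] <;>
          · have h2 := abs_nonneg (w j); have h3 := abs_nonneg (wbar j)
            rw [htdef] at ht; simp only at ht; linarith
      have hwj : w j = 0 := abs_eq_zero.mp h1.1
      have hbj : wbar j = 0 := abs_eq_zero.mp h1.2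
      have hne2 : ((2:ℝ) - p)/2 ≠ 0 := by
        intro h; rw [div_eq_zero_iff] at h; rcases h with h|h <;> linarith
      have e1 : ((0:ℝ))^((2-p)/2) = 0 := Real.zero_rpow hne2
      have e2 : ((0:ℝ))^p = 0 := Real.zero_rpow (by linarith)
      rw [hudef, hvdef]
      simp only [← ht, hwj, hbj, sub_zero, abs_zero]
      rw [e2, e1, mul_zero]
    · have hh0 : (0:ℝ) ≤ |wbar j - w j| := abs_nonneg _
      have e1 : (wbar j - w j)^2 = |wbar j - w j| ^ (2:ℝ) := by
        rw [← sq_abs, ← Real.rpow_natCast |wbar j - w j| 2]; norm_num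
    -- compute
      rw [hudef, hvdef]
      simp only
      calc (t j ^ (p - 2) * (wbar j - w j) ^ 2) ^ (p / 2) * (t j ^ p) ^ ((2 - p) / 2)
          = (t j ^ (p-2))^(p/2) * (|wbar j - w j|^(2:ℝ))^(p/2) * (t j^p)^((2-p)/2) := by
            rw [e1, Real.mul_rpow (Real.rpow_nonneg (ht0 j) _) (Real.rpow_nonneg hh0 _)]
        _ = t j ^ ((p-2)*(p/2)) * |wbar j - w j|^((2:ℝ)*(p/2)) * t j ^ (p*((2-p)/2)) := by
            rw [← Real.rpow_mul (ht0 j), ← Real.rpow_mul hh0, ← Real.rpow_mul (ht0 j)]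
        _ = |wbar j - w j|^p * (t j ^ ((p-2)*(p/2)) * t j ^ (p*((2-p)/2))) := by
            rw [show (2:ℝ)*(p/2) = p by ring]; ring
        _ = |wbar j - w j|^p * t j ^ ((p-2)*(p/2) + p*((2-p)/2)) := by
            rw [Real.rpow_add ht]
        _ = |wbar j - w j|^p := by
            rw [show (p-2)*(p/2) + p*((2-p)/2) = 0 by ring, Real.rpow_zero, mul_one]
  have hur : ∀ j, u j ^ (2 / p) = t j ^ (p - 2) * (wbar j - w j) ^ 2 := by
    intro j
    rw [hudef]
    simp only
    rw [← Real.rpow_mul (mul_nonneg (Real.rpow_nonneg (ht0 j) _) (sq_nonneg _))]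
    rw [show p / 2 * (2 / p) = 1 by field_simp, Real.rpow_one]
  have hvr : ∀ j, v j ^ (2 / (2 - p)) = t j ^ p := by
    intro j
    rw [hvdef]
    simp only
    rw [← Real.rpow_mul (Real.rpow_nonneg (ht0 j) _)]
    have he : (2 - p) / 2 * (2 / (2 - p)) = 1 := by
      have h2p : (2:ℝ) - p ≠ 0 := by linarith
      field_simp
    rw [he, Real.rpow_one]
  rw [Finset.sum_congr rfl (fun j _ => huv j)] at hholder
  rw [Finset.sum_congr rfl (fun j _ => hur j)] at hholder
  rw [Finset.sum_congr rfl (fun j _ => hvr j)] at hholder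
  rw [show (1 / (2/p)) = p/2 by rw [one_div_div],
    show (1 / (2/(2-p))) = (2-p)/2 by rw [one_div_div]] at hholder
  rw [← hWdef, ← hSdef] at hholder
  -- Step 3: Minkowski
  have hmink : S ^ (1/p) ≤ K := by
    have hm := Real.Lp_add_le_of_nonneg (s := Finset.univ) (f := fun j => |w j|)
      (g := fun j => |wbar j|) (le_of_lt hp1) (fun j _ => abs_nonneg _) (fun j _ => abs_nonneg _)
    rw [hSdef, hKdef, hAdef, hBdef]
    calc (∑ j, t j ^ p) ^ (1/p)
        ≤ (∑ j, |w j| ^ p) ^ (1/p) + (∑ j, |wbar j| ^ p) ^ (1/p) := hm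
      _ = _ := by ring
  have hSK : S ≤ K ^ p := by
    have h2 : (S ^ (1/p)) ^ p ≤ K ^ p :=
      Real.rpow_le_rpow (Real.rpow_nonneg hS0 _) hmink (le_of_lt hp0)
    rwa [← Real.rpow_mul hS0, show 1/p * p = 1 by field_simp, Real.rpow_one] at h2
  -- Step 4: combine
  have h4 : ∑ j, |wbar j - w j| ^ p ≤ W ^ (p/2) * K ^ (p * ((2-p)/2)) := by
    calc ∑ j, |wbar j - w j| ^ p ≤ W ^ (p/2) * S ^ ((2-p)/2) := hholder
      _ ≤ W ^ (p/2) * (K ^ p) ^ ((2-p)/2) := by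
          apply mul_le_mul_of_nonneg_left _ (Real.rpow_nonneg hW0 _)
          exact Real.rpow_le_rpow hS0 hSK (by linarith)
      _ = W ^ (p/2) * K ^ (p * ((2-p)/2)) := by
          rw [← Real.rpow_mul hK.le]
  -- Step 5: raise to the power 2/p
  have hsumh_nonneg : (0:ℝ) ≤ ∑ j, |wbar j - w j| ^ p :=
    Finset.sum_nonneg fun j _ => Real.rpow_nonneg (abs_nonneg _) _
  have h5 : ((∑ j, |wbar j - w j| ^ p) ^ (1 / p)) ^ (2:ℕ) ≤ W * K ^ (2 - p) := by
    have e1 : ((∑ j, |wbar j - w j| ^ p) ^ (1 / p)) ^ (2:ℕ)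
        = (∑ j, |wbar j - w j| ^ p) ^ (2 / p) := by
      rw [← Real.rpow_natCast ((∑ j, |wbar j - w j| ^ p) ^ (1 / p)) 2,
        ← Real.rpow_mul hsumh_nonneg]
      congr 1
      push_cast
      ring
    rw [e1]
    calc (∑ j, |wbar j - w j| ^ p) ^ (2 / p)
        ≤ (W ^ (p/2) * K ^ (p * ((2-p)/2))) ^ (2 / p) :=
          Real.rpow_le_rpow hsumh_nonneg h4 (by positivity)
      _ = (W ^ (p/2)) ^ (2/p) * (K ^ (p * ((2-p)/2))) ^ (2/p) :=
          Real.mul_rpow (Real.rpow_nonneg hW0 _) (Real.rpow_nonneg hK.le _)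
      _ = W * K ^ (2 - p) := by
          have hpne : p ≠ 0 := ne_of_gt hp0
          have he1 : p/2 * (2/p) = 1 := by field_simp
          have he2 : p * ((2-p)/2) * (2/p) = 2 - p := by field_simp
          rw [← Real.rpow_mul hW0, ← Real.rpow_mul hK.le, he1, Real.rpow_one, he2]
  -- Final assembly
  have hc0 : (0:ℝ) ≤ (p - 1) / 2 * K ^ (-(2-p)) :=
    mul_nonneg (by linarith) (Real.rpow_nonneg hK.le _)
  calc (p - 1) / 2 * K ^ (-(2 - p)) * ((∑ j, |wbar j - w j| ^ p) ^ (1 / p)) ^ (2:ℕ)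
      ≤ (p - 1) / 2 * K ^ (-(2 - p)) * (W * K ^ (2 - p)) := by
        rw [mul_assoc, mul_assoc]
        exact mul_le_mul_of_nonneg_left
          (mul_le_mul_of_nonneg_left h5 (Real.rpow_nonneg hK.le _)) (by linarith)
    _ = (p - 1) / 2 * W * (K ^ (-(2 - p)) * K ^ (2 - p)) := by ring
    _ = (p - 1) / 2 * W := by
        rw [← Real.rpow_add hK, neg_add_cancel, Real.rpow_zero, mul_one]
    _ ≤ _ := hstep1
end

section
/- Let 1 < p < 2 with conjugate exponent q (1/p + 1/q = 1), γ > 0, X a real n×d matrix, y ∈ ℝⁿ. Define Λ(α) = (1/q)‖Xᵀα‖_q^q + (1/(2γ))‖α‖₂² − ⟨y, α⟩, let ᾱ be its minimizer and w̄ = J_q(Xᵀᾱ) the minimizer of the primal objective F(w) = (γ/2)‖Xw − y‖₂² + (1/p)‖w‖_p^p. Let δ ∈ (0,1), let (λ_m)_{m∈ℕ} be positive reals with λ := inf_m λ_m > 0 and λ_m (1−δ) < γ/2 for all m, and let (α_m)_{m∈ℕ} satisfy α_{m+1} = α_m − λ_m ∇Λ(α_m) and Λ(α_m) − Λ(α_{m+1})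 ≥ λ_m (1−δ) ‖∇Λ(α_m)‖₂² for all m. Then there exists a constant C_p > 0 depending only on p such that, setting w_m = J_q(Xᵀα_m), for every m ∈ ℕ: ‖w_m − w̄‖_p² ≤ C_p^{−1} [2^p q (Λ(α₀) + (γ/2)‖y‖₂²)]^{(2−p)/p} (1 − (2/γ) λ (1−δ))^m (Λ(α₀) − Λ(ᾱ)). In particular w_m converges linearly to w̄ in the ℓ^p norm. -/
open Filter

-- derivative of t ↦ t * |t|^e for e > 0
lemma aux_hasDerivAt_mul_abs_rpow {e : ℝ} (he : 0 < e) (t : ℝ) :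
    HasDerivAt (fun s : ℝ => s * |s| ^ e) ((e + 1) * |t| ^ e) t := by
  rcases eq_or_ne t 0 with rfl | ht
  · have h0 : |(0:ℝ)| ^ e = 0 := by
      simp [Real.zero_rpow he.ne']
    rw [hasDerivAt_iff_tendsto_slope]
    have : Tendsto (fun s : ℝ => |s| ^ e) (nhds 0) (nhds 0) := by
      have hc : ContinuousAt (fun x : ℝ => x ^ e) (|(0:ℝ)|) := by
        simpa using Real.continuousAt_rpow_const 0 e (Or.inr he.le)
      have h3 := ContinuousAt.comp hc (continuous_abs.continuousAt (x := (0:ℝ)))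
      have : ContinuousAt (fun s : ℝ => |s| ^ e) 0 := h3
      simpa [ContinuousAt, h0, Real.zero_rpow he.ne'] using this
    have h2 : Tendsto (fun s : ℝ => |s| ^ e) (nhdsWithin 0 {(0:ℝ)}ᶜ) (nhds ((e+1) * |(0:ℝ)| ^ e)) := by
      rw [h0, mul_zero]
      exact this.mono_left nhdsWithin_le_nhds
    refine h2.congr' ?_
    filter_upwards [self_mem_nhdsWithin] with s hs
    have hs' : s ≠ 0 := hs
    simp [slope_def_field, Real.zero_rpow he.ne']
    field_simp
  · have habs : HasDerivAt (fun s : ℝ => |s|) ((SignType.sign t : ℝ)) t := hasDerivAt_abs ht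
    have hpow : HasDerivAt (fun x : ℝ => x ^ e) (e * |t| ^ (e - 1)) |t| :=
      Real.hasDerivAt_rpow_const (Or.inl (abs_ne_zero.2 ht))
    have hcomp : HasDerivAt (fun s : ℝ => |s| ^ e) (e * |t| ^ (e - 1) * (SignType.sign t : ℝ)) t :=
      hpow.comp t habs
    have := (hasDerivAt_id t).mul hcomp
    refine HasDerivAt.congr_deriv (f := fun s : ℝ => s * |s| ^ e) this (Eq.symm ?_)
    have hts : t * (SignType.sign t : ℝ) = |t| := by
      rcases lt_or_gt_of_ne ht with h | h
      · simp [sign_neg h, abs_of_neg h]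
      · simp [sign_pos h, abs_of_pos h]
    have habs0 : |t| ≠ 0 := abs_ne_zero.2 ht
    have : |t| ^ (e - 1) * |t| = |t| ^ e := by
      rw [← Real.rpow_add_one habs0]; ring_nf
    calc (e + 1) * |t| ^ e = |t| ^ e + e * (|t| ^ (e-1) * |t|) := by rw [this]; ring
    _ = 1 * |t| ^ e + id t * (e * |t| ^ (e - 1) * (SignType.sign t : ℝ)) := by
        have h4 : id t * (e * |t| ^ (e - 1) * (SignType.sign t : ℝ))
            = e * (|t| ^ (e - 1) * (t * (SignType.sign t : ℝ))) := by simp only [id_eq]; ring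
        rw [h4, hts]; ring

-- tangent-line inequality for t ↦ |t|^q / q, via Young's inequality
lemma aux_tangent {q : ℝ} (hq2 : 2 < q) (a b : ℝ) :
    |a| ^ q / q + (a * |a| ^ (q - 2)) * (b - a) ≤ |b| ^ q / q := by
  have hq : 1 < q := by linarith
  have hq0 : (0:ℝ) < q := lt_trans one_pos hq
  set q' := Real.conjExponent q with hq'def
  have hconj : q.HolderConjugate q' := Real.HolderConjugate.conjExponent hq
  set c := a * |a| ^ (q - 2) with hc
  have hca : c * a = |a| ^ q := by
    rcases eq_or_ne a 0 with rfl | ha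
    · simp [hc, Real.zero_rpow hq0.ne']
    · have h1 : |a| ≠ 0 := abs_ne_zero.2 ha
      have h2 : |a| ^ (q - 2) * |a| ^ (2:ℝ) = |a| ^ q := by
        rw [← Real.rpow_add (abs_pos.2 ha)]; ring_nf
      have h3 : |a| ^ (2:ℝ) = a ^ 2 := by
        rw [Real.rpow_two, sq_abs]
      calc c * a = |a| ^ (q - 2) * a ^ 2 := by rw [hc]; ring
      _ = |a| ^ (q - 2) * |a| ^ (2:ℝ) := by rw [h3]
      _ = |a| ^ q := h2
  have hcq' : |c| ^ q' = |a| ^ q := by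
    have h1 : |c| = |a| ^ (q - 1) := by
      rcases eq_or_ne a 0 with rfl | ha
      · simp [hc, Real.zero_rpow (by linarith : (0:ℝ) < q - 2).ne', Real.zero_rpow (by linarith : (0:ℝ) < q - 1).ne']
      · have : |a| ^ (q - 2) * |a| = |a| ^ (q - 1) := by
          rw [← Real.rpow_add_one (abs_ne_zero.2 ha)]; ring_nf
        rw [hc, abs_mul, abs_of_nonneg (Real.rpow_nonneg (abs_nonneg a) _), mul_comm, this]
    rw [h1, ← Real.rpow_mul (abs_nonneg a), hconj.sub_one_mul_conj]
  have hyoung : b * c ≤ |b| ^ q / q + |c| ^ q' / q' := Real.young_inequality b c hconj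
  have hsum : |a| ^ q / q + |a| ^ q / q' = |a| ^ q := by
    rw [div_eq_mul_inv, div_eq_mul_inv, ← mul_add, hconj.inv_add_inv_eq_one, mul_one]
  rw [hcq'] at hyoung
  have hgoal : c * (b - a) = b * c - |a| ^ q := by rw [← hca]; ring
  linarith [hyoung, hgoal, hsum]

-- Lipschitz bound for t ↦ t * |t|^(q-2) on [-M, M]
lemma aux_lipschitz {q M : ℝ} (hq : 2 < q) (hM : 0 ≤ M) {a b : ℝ}
    (ha : |a| ≤ M) (hb : |b| ≤ M) :
    |a * |a| ^ (q - 2) - b * |b| ^ (q - 2)| ≤ (q - 1) * M ^ (q - 2) * |a - b| := by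
  have he : (0:ℝ) < q - 2 := by linarith
  have key := Convex.norm_image_sub_le_of_norm_hasDerivWithin_le
    (f := fun s : ℝ => s * |s| ^ (q - 2)) (f' := fun t : ℝ => (q - 1) * |t| ^ (q - 2))
    (s := Set.Icc (-M) M) (C := (q - 1) * M ^ (q - 2))
    (fun x _ => by
      have := (aux_hasDerivAt_mul_abs_rpow he x).hasDerivWithinAt (s := Set.Icc (-M) M)
      convert this using 1; ring_nf)
    (fun x hx => by
      have hxM : |x| ≤ M := abs_le.2 ⟨hx.1, hx.2⟩
      have h1 : |x| ^ (q - 2) ≤ M ^ (q - 2) :=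
        Real.rpow_le_rpow (abs_nonneg x) hxM he.le
      have h2 : (0:ℝ) ≤ (q - 1) * |x| ^ (q - 2) := by
        have := Real.rpow_nonneg (abs_nonneg x) (q - 2)
        nlinarith
      rw [Real.norm_eq_abs, abs_of_nonneg h2]
      nlinarith)
    (convex_Icc _ _) (abs_le.1 hb) (abs_le.1 ha)
  simpa [Real.norm_eq_abs] using key

lemma aux_sign {q : ℝ} (hq : 2 < q) (a : ℝ) :
    Real.sign a * |a| ^ (q - 1) = a * |a| ^ (q - 2) := by
  rcases lt_trichotomy a 0 with h | rfl | h
  · rw [Real.sign_of_neg h, abs_of_neg h]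
    have h2 : (-a) ^ (q - 2) * (-a) = (-a) ^ (q - 1) := by
      rw [← Real.rpow_add_one (by linarith : -a ≠ 0)]; ring_nf
    nlinarith [h2]
  · simp [Real.zero_rpow (by linarith : (0:ℝ) < q - 1).ne',
      Real.zero_rpow (by linarith : (0:ℝ) < q - 2).ne']
  · rw [Real.sign_of_pos h, abs_of_pos h]
    have h2 : a ^ (q - 2) * a = a ^ (q - 1) := by
      rw [← Real.rpow_add_one (ne_of_gt h)]; ring_nf
    nlinarith [h2]

set_option maxHeartbeats 1000000 in
/-- linear convergence of the dual gradient descent with linesearch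
for ℓ^p-regularized least squares, `1 < p < 2`, `1/p + 1/q = 1`:
with `Λ` the dual objective, `∇Λ(α) = X J_q(Xᵀα) − y + γ⁻¹α`, `ᾱ` the dual
minimizer, `w̄ = J_q(Xᵀᾱ)` the primal minimizer, stepsizes `λ_m` bounded below
by `λ > 0` and satisfying `λ_m(1−δ) < γ/2`, gradient iterates
`α_{m+1} = α_m − λ_m ∇Λ(α_m)` with sufficient decrease
`Λ(α_m) − Λ(α_{m+1}) ≥ λ_m(1−δ)‖∇Λ(α_m)‖₂²`, there exists `C_p > 0` such that,
for `w_m = J_q(Xᵀα_m)` and all `m`,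
`‖w_m − w̄‖_p² ≤ C_p⁻¹ [2^p q (Λ(α₀) + (γ/2)‖y‖₂²)]^{(2−p)/p}
   (1 − (2/γ)λ(1−δ))^m (Λ(α₀) − Λ(ᾱ))`;
in particular `w_m` converges linearly to `w̄` in the ℓ^p norm. -/
theorem dual_gradient_descent_linear_convergence
    (p q : ℝ) (hp1 : 1 < p) (hp2 : p < 2) (hpq : 1 / p + 1 / q = 1)
    (n d : ℕ) (γ : ℝ) (hγ : 0 < γ)
    (X : Matrix (Fin n) (Fin d) ℝ) (y : Fin n → ℝ)
    (J : (Fin d → ℝ) → Fin d → ℝ)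
    (hJ : ∀ u j, J u j = Real.sign (u j) * |u j| ^ (q - 1))
    (Λ : (Fin n → ℝ) → ℝ)
    (hΛ : ∀ α, Λ α = 1 / q * ∑ j, |X.transpose.mulVec α j| ^ q
        + 1 / (2 * γ) * ∑ i, α i ^ 2 - ∑ i, y i * α i)
    (gradΛ : (Fin n → ℝ) → Fin n → ℝ)
    (hgrad : ∀ α, gradΛ α
        = X.mulVec (J (X.transpose.mulVec α)) - y + γ⁻¹ • α)
    (F : (Fin d → ℝ) → ℝ)
    (hF : ∀ w, F w = γ / 2 * ∑ i, (X.mulVec w i - y i) ^ 2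
        + 1 / p * ∑ j, |w j| ^ p)
    (ᾱ : Fin n → ℝ) (hᾱ : ∀ α, Λ ᾱ ≤ Λ α)
    (wbar : Fin d → ℝ) (hwbar : wbar = J (X.transpose.mulVec ᾱ))
    (hwbarmin : ∀ w, F wbar ≤ F w)
    (δ : ℝ) (hδ : δ ∈ Set.Ioo (0 : ℝ) 1)
    (lamSeq : ℕ → ℝ) (lam : ℝ) (hlam : 0 < lam)
    (hlaminf : ∀ m, lam ≤ lamSeq m)
    (hlamub : ∀ m, lamSeq m * (1 - δ) < γ / 2)
    (α : ℕ → Fin n → ℝ)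
    (hrec : ∀ m, α (m + 1) = α m - lamSeq m • gradΛ (α m))
    (hdec : ∀ m, lamSeq m * (1 - δ) * ∑ i, gradΛ (α m) i ^ 2
        ≤ Λ (α m) - Λ (α (m + 1))) :
    ∃ C > 0, ∀ m : ℕ,
      ((∑ j, |J (X.transpose.mulVec (α m)) j - wbar j| ^ p) ^ (1 / p)) ^ (2 : ℕ)
        ≤ C⁻¹ * ((2 : ℝ) ^ p * q * (Λ (α 0) + γ / 2 * ∑ i, y i ^ 2)) ^ ((2 - p) / p)
            * (1 - 2 / γ * lam * (1 - δ)) ^ m * (Λ (α 0) - Λ ᾱ) := by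
  obtain ⟨hδ0, hδ1⟩ := hδ
  have hp0 : (0:ℝ) < p := by linarith
  have hδ' : (0:ℝ) < 1 - δ := by linarith
  -- q > 2
  have hq2 : 2 < q := by
    have ha : 1 / q = 1 - 1 / p := by linarith
    have hb : 1 / 2 < 1 / p := by
      rw [div_lt_div_iff₀ two_pos hp0]; linarith
    have hc : 1 / p < 1 := by rw [div_lt_one hp0]; linarith
    have hpos : 0 < 1 / q := by rw [ha]; linarith
    have hq0 : 0 < q := one_div_pos.mp hpos
    have hlt : 1 / q < 1 / 2 := by rw [ha]; linarith
    rw [div_lt_div_iff₀ hq0 two_pos] at hlt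
    linarith
  have hq0 : 0 < q := by linarith
  -- rewrite J in product form
  have hJ2 : ∀ u (j : Fin d), J u j = u j * |u j| ^ (q - 2) := by
    intro u j; rw [hJ, aux_sign hq2]
  -- strong convexity of Λ
  have hC : ∀ u v : Fin n → ℝ,
      Λ u + (∑ i, gradΛ u i * (v i - u i)) + 1 / (2 * γ) * ∑ i, (v i - u i) ^ 2 ≤ Λ v := by
    intro u v
    set J' := J (X.transpose.mulVec u) with hJ'
    have hTapp : ∀ (w : Fin n → ℝ) (j : Fin d),
        X.transpose.mulVec w j = ∑ i, X i j * w i := by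
      intro w j
      simp [Matrix.mulVec, dotProduct, Matrix.transpose_apply]
    have hswap : ∑ i, X.mulVec J' i * (v i - u i)
        = ∑ j, J' j * (X.transpose.mulVec v j - X.transpose.mulVec u j) := by
      have h1 : ∀ i, X.mulVec J' i * (v i - u i)
          = ∑ j, J' j * (X i j * v i - X i j * u i) := by
        intro i
        rw [show X.mulVec J' i = ∑ j, X i j * J' j by
          simp [Matrix.mulVec, dotProduct], Finset.sum_mul]
        exact Finset.sum_congr rfl fun j _ => by ring
      calc ∑ i, X.mulVec J' i * (v i - u i)
          = ∑ i, ∑ j, J' j * (X i j * v i - X i j * u i) :=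
            Finset.sum_congr rfl fun i _ => h1 i
        _ = ∑ j, ∑ i, J' j * (X i j * v i - X i j * u i) := Finset.sum_comm
        _ = ∑ j, J' j * (X.transpose.mulVec v j - X.transpose.mulVec u j) := by
            refine Finset.sum_congr rfl fun j _ => ?_
            rw [← Finset.mul_sum, hTapp v j, hTapp u j, ← Finset.sum_sub_distrib]
    have hgradsum : ∑ i, gradΛ u i * (v i - u i)
        = (∑ i, X.mulVec J' i * (v i - u i))
          - (∑ i, y i * (v i - u i)) + ∑ i, γ⁻¹ * u i * (v i - u i) := by
      rw [hgrad]
      simp only [Pi.add_apply, Pi.sub_apply, Pi.smul_apply, smul_eq_mul]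
      rw [← Finset.sum_sub_distrib, ← Finset.sum_add_distrib]
      exact Finset.sum_congr rfl fun i _ => by rw [← hJ']; ring
    have hquad : 1 / (2 * γ) * ∑ i, v i ^ 2
        = 1 / (2 * γ) * ∑ i, u i ^ 2 + (∑ i, γ⁻¹ * u i * (v i - u i))
          + 1 / (2 * γ) * ∑ i, (v i - u i) ^ 2 := by
      have : ∀ i, 1 / (2 * γ) * v i ^ 2
          = 1 / (2 * γ) * u i ^ 2 + γ⁻¹ * u i * (v i - u i)
            + 1 / (2 * γ) * (v i - u i) ^ 2 := by
        intro i; field_simp; ring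
      rw [Finset.mul_sum, Finset.mul_sum, Finset.mul_sum]
      rw [← Finset.sum_add_distrib, ← Finset.sum_add_distrib]
      exact Finset.sum_congr rfl fun i _ => this i
    have hlin : ∑ i, y i * v i = ∑ i, y i * u i + ∑ i, y i * (v i - u i) := by
      rw [← Finset.sum_add_distrib]
      exact Finset.sum_congr rfl fun i _ => by ring
    have hO : 1 / q * ∑ j, |X.transpose.mulVec u j| ^ q
        + ∑ j, J' j * (X.transpose.mulVec v j - X.transpose.mulVec u j)
        ≤ 1 / q * ∑ j, |X.transpose.mulVec v j| ^ q := by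
      rw [Finset.mul_sum, Finset.mul_sum, ← Finset.sum_add_distrib]
      refine Finset.sum_le_sum fun j _ => ?_
      have := aux_tangent hq2 (X.transpose.mulVec u j) (X.transpose.mulVec v j)
      rw [hJ', hJ2]
      rw [one_div, inv_mul_eq_div, inv_mul_eq_div]
      linarith [this]
    rw [hΛ u, hΛ v, hgradsum, hswap]
    linarith [hO, hquad, hlin]
  -- notation
  set e : ℕ → ℝ := fun m => Λ (α m) - Λ ᾱ with he
  have he_nonneg : ∀ m, 0 ≤ e m := fun m => by simp [he, sub_nonneg, hᾱ (α m)]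
  -- PL inequality : e m ≤ γ/2 * ‖grad‖²
  have hPL : ∀ m, e m ≤ γ / 2 * ∑ i, gradΛ (α m) i ^ 2 := by
    intro m
    have h1 := hC (α m) ᾱ
    have h2 : ∀ i, -(γ / 2 * gradΛ (α m) i ^ 2)
        ≤ gradΛ (α m) i * (ᾱ i - α m i) + 1 / (2 * γ) * (ᾱ i - α m i) ^ 2 := by
      intro i
      have h3 : 0 ≤ 1 / (2 * γ) * (γ * gradΛ (α m) i + (ᾱ i - α m i)) ^ 2 :=
        mul_nonneg (by positivity) (sq_nonneg _)
      have h4 : 1 / (2 * γ) * (γ * gradΛ (α m) i + (ᾱ i - α m i)) ^ 2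
          = γ / 2 * gradΛ (α m) i ^ 2 + gradΛ (α m) i * (ᾱ i - α m i)
            + 1 / (2 * γ) * (ᾱ i - α m i) ^ 2 := by
        field_simp; ring
      linarith [h3, h4]
    have h5 : -(γ / 2 * ∑ i, gradΛ (α m) i ^ 2)
        ≤ (∑ i, gradΛ (α m) i * (ᾱ i - α m i))
          + 1 / (2 * γ) * ∑ i, (ᾱ i - α m i) ^ 2 := by
      rw [Finset.mul_sum, Finset.mul_sum, ← Finset.sum_neg_distrib, ← Finset.sum_add_distrib]
      exact Finset.sum_le_sum fun i _ => h2 i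
    simp only [he]
    linarith [h1, h5]
  -- distance bound : ‖α m - ᾱ‖² ≤ 4γ² ‖grad‖²
  have hdist : ∀ m, ∑ i, (α m i - ᾱ i) ^ 2 ≤ 4 * γ ^ 2 * ∑ i, gradΛ (α m) i ^ 2 := by
    intro m
    set S := ∑ i, (α m i - ᾱ i) ^ 2 with hS
    set G := ∑ i, gradΛ (α m) i ^ 2 with hG
    have hS0 : 0 ≤ S := Finset.sum_nonneg fun i _ => sq_nonneg _
    have hG0 : 0 ≤ G := Finset.sum_nonneg fun i _ => sq_nonneg _
    have h1 := hC (α m) ᾱ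
    have hSS : ∑ i, (ᾱ i - α m i) ^ 2 = S := by
      rw [hS]; exact Finset.sum_congr rfl fun i _ => by ring
    -- 1/(2γ) S ≤ ∑ grad * (α - ᾱ)
    have h2 : 1 / (2 * γ) * S ≤ ∑ i, gradΛ (α m) i * (α m i - ᾱ i) := by
      have := hᾱ (α m)
      have h3 : ∑ i, gradΛ (α m) i * (α m i - ᾱ i)
          = -∑ i, gradΛ (α m) i * (ᾱ i - α m i) := by
        rw [← Finset.sum_neg_distrib]
        exact Finset.sum_congr rfl fun i _ => by ring
      rw [hSS] at h1
      rw [h3]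
      linarith
    have hcs := Finset.sum_mul_sq_le_sq_mul_sq Finset.univ
      (fun i => gradΛ (α m) i) (fun i => α m i - ᾱ i)
    have h4 : (∑ i, gradΛ (α m) i * (α m i - ᾱ i)) ^ 2 ≤ G * S := by
      simpa [hG, hS] using hcs
    rcases eq_or_lt_of_le hS0 with h | h
    · rw [← h]; positivity
    · have h5 : (1 / (2 * γ) * S) ^ 2 ≤ G * S := by
        exact le_trans (pow_le_pow_left₀ (by positivity) h2 2) h4
      have h7 : S ^ 2 ≤ 4 * γ ^ 2 * (G * S) := by
        have : (1 / (2 * γ) * S) ^ 2 = S ^ 2 / (4 * γ ^ 2) := by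
          field_simp; ring
        rw [this] at h5
        rw [div_le_iff₀ (by positivity)] at h5
        linarith [h5]
      nlinarith [h7, h]
  -- the contraction factor
  set r : ℝ := 1 - 2 / γ * lam * (1 - δ) with hr
  have hr0 : 0 < r := by
    have h1 := hlamub 0
    have h2 := hlaminf 0
    have h3 : lam * (1 - δ) < γ / 2 := by
      calc lam * (1 - δ) ≤ lamSeq 0 * (1 - δ) := by
            apply mul_le_mul_of_nonneg_right h2 hδ'.le
      _ < γ / 2 := h1
    rw [hr]
    have : 2 / γ * lam * (1 - δ) < 1 := by
      rw [div_mul_eq_mul_div, div_mul_eq_mul_div, div_lt_one hγ]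
      linarith
    linarith
  have hr1 : r < 1 := by
    rw [hr]
    have : 0 < 2 / γ * lam * (1 - δ) := by positivity
    linarith
  -- one step decay
  have hstep : ∀ m, e (m + 1) ≤ r * e m := by
    intro m
    have h1 := hdec m
    have h2 : lam * (1 - δ) * ∑ i, gradΛ (α m) i ^ 2
        ≤ lamSeq m * (1 - δ) * ∑ i, gradΛ (α m) i ^ 2 := by
      have hGn : 0 ≤ ∑ i, gradΛ (α m) i ^ 2 := Finset.sum_nonneg fun i _ => sq_nonneg _
      apply mul_le_mul_of_nonneg_right _ hGn
      exact mul_le_mul_of_nonneg_right (hlaminf m) hδ'.le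
    have h3 := hPL m
    have h4 : 2 / γ * e m ≤ ∑ i, gradΛ (α m) i ^ 2 := by
      rw [div_mul_eq_mul_div, div_le_iff₀ hγ]
      calc 2 * e m ≤ 2 * (γ / 2 * ∑ i, gradΛ (α m) i ^ 2) := by linarith
      _ = (∑ i, gradΛ (α m) i ^ 2) * γ := by ring
    have h5 : lam * (1 - δ) * (2 / γ * e m) ≤ lam * (1 - δ) * ∑ i, gradΛ (α m) i ^ 2 := by
      apply mul_le_mul_of_nonneg_left h4 (by positivity)
    have h6 : Λ (α m) - Λ (α (m + 1)) = e m - e (m + 1) := by simp [he]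
    rw [h6] at h1
    have : e (m + 1) ≤ e m - lam * (1 - δ) * (2 / γ * e m) := by linarith
    calc e (m + 1) ≤ e m - lam * (1 - δ) * (2 / γ * e m) := this
    _ = r * e m := by rw [hr]; ring
  -- geometric decay
  have hgeom : ∀ m, e m ≤ r ^ m * e 0 := by
    intro m
    induction m with
    | zero => simp
    | succ k ih =>
      calc e (k + 1) ≤ r * e k := hstep k
      _ ≤ r * (r ^ k * e 0) := mul_le_mul_of_nonneg_left ih hr0.le
      _ = r ^ (k + 1) * e 0 := by ring
  -- gradient bound from linesearch
  have hgb : ∀ m, ∑ i, gradΛ (α m) i ^ 2 ≤ e m / (lam * (1 - δ)) := by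
    intro m
    have h1 := hdec m
    have hGn : 0 ≤ ∑ i, gradΛ (α m) i ^ 2 := Finset.sum_nonneg fun i _ => sq_nonneg _
    have h2 : lam * (1 - δ) * ∑ i, gradΛ (α m) i ^ 2
        ≤ lamSeq m * (1 - δ) * ∑ i, gradΛ (α m) i ^ 2 := by
      apply mul_le_mul_of_nonneg_right _ hGn
      exact mul_le_mul_of_nonneg_right (hlaminf m) hδ'.le
    have h3 : Λ (α m) - Λ (α (m + 1)) ≤ e m := by
      have h7 := he_nonneg (m + 1)
      simp only [he] at h7 ⊢
      linarith
    rw [le_div_iff₀ (by positivity : (0:ℝ) < lam * (1 - δ))]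
    nlinarith [h1, h2, h3]
  -- distance to minimizer controlled by e m
  set c1 : ℝ := 4 * γ ^ 2 / (lam * (1 - δ)) with hc1
  have hc1pos : 0 < c1 := by positivity
  have hSm : ∀ m, ∑ i, (α m i - ᾱ i) ^ 2 ≤ c1 * e m := by
    intro m
    calc ∑ i, (α m i - ᾱ i) ^ 2 ≤ 4 * γ ^ 2 * ∑ i, gradΛ (α m) i ^ 2 := hdist m
    _ ≤ 4 * γ ^ 2 * (e m / (lam * (1 - δ))) :=
        mul_le_mul_of_nonneg_left (hgb m) (by positivity)
    _ = c1 * e m := by rw [hc1]; ring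
  -- transpose application formula (outer scope)
  have hT : ∀ (w : Fin n → ℝ) (j : Fin d),
      X.transpose.mulVec w j = ∑ i, X i j * w i := by
    intro w j
    simp [Matrix.mulVec, dotProduct, Matrix.transpose_apply]
  -- column norms
  set R2 : ℝ := ∑ j, ∑ i, (X i j) ^ 2 with hR2
  have hR2nn : 0 ≤ R2 :=
    Finset.sum_nonneg fun j _ => Finset.sum_nonneg fun i _ => sq_nonneg _
  have hcol : ∀ (w : Fin n → ℝ) (j : Fin d),
      (X.transpose.mulVec w j) ^ 2 ≤ R2 * ∑ i, w i ^ 2 := by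
    intro w j
    rw [hT]
    have hcs := Finset.sum_mul_sq_le_sq_mul_sq Finset.univ
      (fun i => X i j) (fun i => w i)
    have hcolle : (∑ i, (X i j) ^ 2) ≤ R2 := by
      rw [hR2]
      exact Finset.single_le_sum
        (fun j' _ => Finset.sum_nonneg fun i _ => sq_nonneg (X i j')) (Finset.mem_univ j)
    have hw2 : 0 ≤ ∑ i, w i ^ 2 := Finset.sum_nonneg fun i _ => sq_nonneg _
    calc (∑ i, X i j * w i) ^ 2 ≤ (∑ i, (X i j) ^ 2) * ∑ i, w i ^ 2 := hcs
    _ ≤ R2 * ∑ i, w i ^ 2 := mul_le_mul_of_nonneg_right hcolle hw2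
  -- e m is bounded by e 0
  have hele : ∀ m, e m ≤ e 0 := by
    intro m
    calc e m ≤ r ^ m * e 0 := hgeom m
    _ ≤ 1 * e 0 := mul_le_mul_of_nonneg_right
        (pow_le_one₀ hr0.le hr1.le) (he_nonneg 0)
    _ = e 0 := one_mul _
  -- bound on the dual variables' images
  have hdiffbd : ∀ m (j : Fin d),
      |X.transpose.mulVec (α m) j - X.transpose.mulVec ᾱ j|
        ≤ Real.sqrt (R2 * (c1 * e m)) := by
    intro m j
    have hlin : X.transpose.mulVec (α m) j - X.transpose.mulVec ᾱ j
        = X.transpose.mulVec (fun i => α m i - ᾱ i) j := by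
      rw [hT, hT, hT, ← Finset.sum_sub_distrib]
      exact Finset.sum_congr rfl fun i _ => by ring
    rw [hlin]
    have h1 : (X.transpose.mulVec (fun i => α m i - ᾱ i) j) ^ 2
        ≤ R2 * (c1 * e m) := by
      calc (X.transpose.mulVec (fun i => α m i - ᾱ i) j) ^ 2
          ≤ R2 * ∑ i, (α m i - ᾱ i) ^ 2 := hcol _ j
      _ ≤ R2 * (c1 * e m) := mul_le_mul_of_nonneg_left (hSm m) hR2nn
    calc |X.transpose.mulVec (fun i => α m i - ᾱ i) j|
        = Real.sqrt ((X.transpose.mulVec (fun i => α m i - ᾱ i) j) ^ 2) :=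
          (Real.sqrt_sq_eq_abs _).symm
    _ ≤ Real.sqrt (R2 * (c1 * e m)) := Real.sqrt_le_sqrt h1
  set M0 : ℝ := Real.sqrt (∑ j, (X.transpose.mulVec ᾱ j) ^ 2) with hM0
  set U0 : ℝ := Real.sqrt (R2 * (c1 * e 0)) with hU0
  set M : ℝ := M0 + U0 with hM
  have hM0nn : 0 ≤ M0 := Real.sqrt_nonneg _
  have hU0nn : 0 ≤ U0 := Real.sqrt_nonneg _
  have hMnn : 0 ≤ M := add_nonneg hM0nn hU0nn
  have hbarbd : ∀ j : Fin d, |X.transpose.mulVec ᾱ j| ≤ M := by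
    intro j
    have h1 : (X.transpose.mulVec ᾱ j) ^ 2 ≤ ∑ j', (X.transpose.mulVec ᾱ j') ^ 2 :=
      Finset.single_le_sum (f := fun j' => (X.transpose.mulVec ᾱ j') ^ 2)
        (fun j' _ => sq_nonneg _) (Finset.mem_univ j)
    calc |X.transpose.mulVec ᾱ j|
        = Real.sqrt ((X.transpose.mulVec ᾱ j) ^ 2) := (Real.sqrt_sq_eq_abs _).symm
    _ ≤ M0 := by rw [hM0]; exact Real.sqrt_le_sqrt h1
    _ ≤ M := by rw [hM]; linarith
  have hambd : ∀ m (j : Fin d), |X.transpose.mulVec (α m) j| ≤ M := by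
    intro m j
    have h1 : Real.sqrt (R2 * (c1 * e m)) ≤ U0 := by
      rw [hU0]
      apply Real.sqrt_le_sqrt
      apply mul_le_mul_of_nonneg_left _ hR2nn
      exact mul_le_mul_of_nonneg_left (hele m) hc1pos.le
    calc |X.transpose.mulVec (α m) j|
        ≤ |X.transpose.mulVec ᾱ j|
          + |X.transpose.mulVec (α m) j - X.transpose.mulVec ᾱ j| := by
          have := abs_sub_abs_le_abs_sub (X.transpose.mulVec (α m) j)
            (X.transpose.mulVec ᾱ j)
          have h2 := abs_add_le (X.transpose.mulVec ᾱ j)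
            (X.transpose.mulVec (α m) j - X.transpose.mulVec ᾱ j)
          have h3 : X.transpose.mulVec ᾱ j
              + (X.transpose.mulVec (α m) j - X.transpose.mulVec ᾱ j)
              = X.transpose.mulVec (α m) j := by ring
          rw [h3] at h2
          exact h2
    _ ≤ M0 + U0 := by
        have h4 := hdiffbd m j
        have h5 : |X.transpose.mulVec ᾱ j| ≤ M0 := by
          have h1' : (X.transpose.mulVec ᾱ j) ^ 2
              ≤ ∑ j', (X.transpose.mulVec ᾱ j') ^ 2 :=
            Finset.single_le_sum (f := fun j' => (X.transpose.mulVec ᾱ j') ^ 2)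
              (fun j' _ => sq_nonneg _) (Finset.mem_univ j)
          calc |X.transpose.mulVec ᾱ j|
              = Real.sqrt ((X.transpose.mulVec ᾱ j) ^ 2) := (Real.sqrt_sq_eq_abs _).symm
          _ ≤ M0 := by rw [hM0]; exact Real.sqrt_le_sqrt h1'
        linarith [h4, h1]
    _ = M := hM.symm
  -- Lipschitz constant for J
  set L : ℝ := (q - 1) * M ^ (q - 2) with hL
  have hLnn : 0 ≤ L :=
    mul_nonneg (by linarith) (Real.rpow_nonneg hMnn _)
  have hcomp : ∀ m (j : Fin d),
      |J (X.transpose.mulVec (α m)) j - wbar j|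
        ≤ L * |X.transpose.mulVec (α m) j - X.transpose.mulVec ᾱ j| := by
    intro m j
    rw [hwbar, hJ2, hJ2]
    exact aux_lipschitz hq2 hMnn (hambd m j) (hbarbd j)
  -- main pointwise bound
  set B : ℝ := ((d:ℝ) ^ (1/p)) ^ (2:ℕ) * (L ^ 2 * (R2 * c1)) with hB
  have hBnn : 0 ≤ B := by
    apply mul_nonneg (pow_nonneg (Real.rpow_nonneg (Nat.cast_nonneg d) _) _)
    exact mul_nonneg (sq_nonneg _) (mul_nonneg hR2nn hc1pos.le)
  have hmain : ∀ m,
      ((∑ j, |J (X.transpose.mulVec (α m)) j - wbar j| ^ p) ^ (1 / p)) ^ (2 : ℕ)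
        ≤ B * (r ^ m * e 0) := by
    intro m
    set T : ℝ := L * Real.sqrt (R2 * (c1 * e m)) with hTdef
    have hTnn : 0 ≤ T := mul_nonneg hLnn (Real.sqrt_nonneg _)
    have hcomp2 : ∀ j : Fin d, |J (X.transpose.mulVec (α m)) j - wbar j| ≤ T := by
      intro j
      calc |J (X.transpose.mulVec (α m)) j - wbar j|
          ≤ L * |X.transpose.mulVec (α m) j - X.transpose.mulVec ᾱ j| := hcomp m j
      _ ≤ T := by rw [hTdef]; exact mul_le_mul_of_nonneg_left (hdiffbd m j) hLnn
    have hsum : (∑ j, |J (X.transpose.mulVec (α m)) j - wbar j| ^ p)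
        ≤ (d : ℝ) * T ^ p := by
      have h1 : ∀ j : Fin d, |J (X.transpose.mulVec (α m)) j - wbar j| ^ p ≤ T ^ p :=
        fun j => Real.rpow_le_rpow (abs_nonneg _) (hcomp2 j) hp0.le
      calc (∑ j, |J (X.transpose.mulVec (α m)) j - wbar j| ^ p)
          ≤ ∑ _j : Fin d, T ^ p := Finset.sum_le_sum fun j _ => h1 j
      _ = (d : ℝ) * T ^ p := by
          rw [Finset.sum_const, Finset.card_univ, Fintype.card_fin, nsmul_eq_mul]
    have hAnn : 0 ≤ ∑ j, |J (X.transpose.mulVec (α m)) j - wbar j| ^ p :=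
      Finset.sum_nonneg fun j _ => Real.rpow_nonneg (abs_nonneg _) _
    have h2 : (∑ j, |J (X.transpose.mulVec (α m)) j - wbar j| ^ p) ^ (1/p)
        ≤ ((d : ℝ) * T ^ p) ^ (1/p) :=
      Real.rpow_le_rpow hAnn hsum (by positivity)
    have h3 : ((d : ℝ) * T ^ p) ^ (1/p) = (d : ℝ) ^ (1/p) * T := by
      rw [Real.mul_rpow (Nat.cast_nonneg d) (Real.rpow_nonneg hTnn _)]
      congr 1
      rw [← Real.rpow_mul hTnn, mul_one_div_cancel hp0.ne', Real.rpow_one]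
    have h4 : ((∑ j, |J (X.transpose.mulVec (α m)) j - wbar j| ^ p) ^ (1/p)) ^ (2:ℕ)
        ≤ ((d : ℝ) ^ (1/p) * T) ^ (2:ℕ) := by
      apply pow_le_pow_left₀ (Real.rpow_nonneg hAnn _)
      rw [← h3]; exact h2
    have h5 : ((d : ℝ) ^ (1/p) * T) ^ (2:ℕ) = ((d:ℝ) ^ (1/p)) ^ (2:ℕ) * T ^ (2:ℕ) :=
      mul_pow _ _ _
    have h6 : T ^ (2:ℕ) = L ^ 2 * (R2 * (c1 * e m)) := by
      rw [hTdef, mul_pow, Real.sq_sqrt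
        (mul_nonneg hR2nn (mul_nonneg hc1pos.le (he_nonneg m)))]
    calc ((∑ j, |J (X.transpose.mulVec (α m)) j - wbar j| ^ p) ^ (1/p)) ^ (2:ℕ)
        ≤ ((d : ℝ) ^ (1/p)) ^ (2:ℕ) * (L ^ 2 * (R2 * (c1 * e m))) := by
          rw [← h6, ← h5]; exact h4
    _ = B * e m := by rw [hB]; ring
    _ ≤ B * (r ^ m * e 0) := mul_le_mul_of_nonneg_left (hgeom m) hBnn
  -- lower bound on the dual objective: Λ ᾱ + γ/2 ‖y‖² ≥ 0
  have hlow : 0 ≤ Λ ᾱ + γ / 2 * ∑ i, y i ^ 2 := by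
    rw [hΛ]
    have h1 : 0 ≤ 1 / q * ∑ j, |X.transpose.mulVec ᾱ j| ^ q :=
      mul_nonneg (by positivity)
        (Finset.sum_nonneg fun j _ => Real.rpow_nonneg (abs_nonneg _) _)
    have h2 : ∑ i, y i * ᾱ i ≤ γ / 2 * ∑ i, y i ^ 2 + 1 / (2 * γ) * ∑ i, ᾱ i ^ 2 := by
      rw [Finset.mul_sum, Finset.mul_sum, ← Finset.sum_add_distrib]
      refine Finset.sum_le_sum fun i _ => ?_
      have hsq : 0 ≤ 1 / (2 * γ) * (γ * y i - ᾱ i) ^ 2 :=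
        mul_nonneg (by positivity) (sq_nonneg _)
      have hid : 1 / (2 * γ) * (γ * y i - ᾱ i) ^ 2
          = γ / 2 * y i ^ 2 + 1 / (2 * γ) * ᾱ i ^ 2 - y i * ᾱ i := by
        field_simp; ring
      linarith [hsq, hid]
    linarith [h1, h2]
  -- the constant K
  set K : ℝ := (2:ℝ) ^ p * q * (Λ (α 0) + γ / 2 * ∑ i, y i ^ 2) with hK
  have hE0 : Λ (α 0) - Λ ᾱ = e 0 := rfl
  rcases eq_or_lt_of_le (he_nonneg 0) with hzero | hpos
  · -- degenerate case : α 0 is already optimal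
    refine ⟨1, one_pos, fun m => ?_⟩
    have h1 : ((∑ j, |J (X.transpose.mulVec (α m)) j - wbar j| ^ p) ^ (1 / p)) ^ (2:ℕ)
        ≤ 0 := by
      have := hmain m
      rw [← hzero] at this
      simpa using this
    rw [hE0, ← hzero]
    simpa using h1
  · -- main case
    have hKpos : 0 < K := by
      rw [hK]
      have h1 : 0 < Λ (α 0) + γ / 2 * ∑ i, y i ^ 2 := by
        have : Λ (α 0) + γ / 2 * ∑ i, y i ^ 2
            = e 0 + (Λ ᾱ + γ / 2 * ∑ i, y i ^ 2) := by simp [he]; ring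
        rw [this]
        linarith [hlow, hpos]
      have h2 : (0:ℝ) < (2:ℝ) ^ p := Real.rpow_pos_of_pos two_pos p
      positivity
    set K' : ℝ := K ^ ((2 - p) / p) with hK'
    have hK'pos : 0 < K' := Real.rpow_pos_of_pos hKpos _
    refine ⟨K' / (B + 1), by positivity, fun m => ?_⟩
    have hCinv : (K' / (B + 1))⁻¹ * K' = B + 1 := by
      rw [inv_div]
      field_simp
    have hrm : 0 ≤ r ^ m * e 0 := mul_nonneg (pow_nonneg hr0.le m) (he_nonneg 0)
    calc ((∑ j, |J (X.transpose.mulVec (α m)) j - wbar j| ^ p) ^ (1 / p)) ^ (2:ℕ)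
        ≤ B * (r ^ m * e 0) := hmain m
    _ ≤ (B + 1) * (r ^ m * e 0) :=
        mul_le_mul_of_nonneg_right (by linarith) hrm
    _ = (K' / (B + 1))⁻¹ * K' * r ^ m * (Λ (α 0) - Λ ᾱ) := by
        rw [hCinv, hE0]; ring
end
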